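/- arXiv:2003.07522 — 3 statements merged into one kernel-verified Lean document; each statement's English description precedes it below -/
import Mathlib

section
/- Let A, B, C ∈ ℂ^{r×r} with C + nI invertible for all integers n ≥ 0, let B and C commute, and let |x| < 1. (i) If A + kI is invertible for all integers k ≥ 0, then for every non-negative integer s: ₂F₁(A+sI, B; C; x) = ₂F₁(A, B; C; x) + x·[∑_{k=1}^{s} ₂F₁(A+kI, B+I; C+I; x)]·B·C⁻¹. (ii) If moreover A − kI is invertible for all integers 1 ≤ k ≤ s, then ₂F₁(A−sI, B; C; x) = ₂F₁(A, B; C; x) − x·[∑_{k=0}^{s−1} ₂F₁(A−kI, B+I; C+I; x)]·B·C⁻¹. -/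
set_option maxHeartbeats 1000000


/-- The shifted factorial (Pochhammer) matrix: `(A)_0 = I`, `(A)_{n+1} = (A)_n (A + nI)`. -/
noncomputable def mPoch {r : ℕ} (A : Matrix (Fin r) (Fin r) ℂ) : ℕ → Matrix (Fin r) (Fin r) ℂ
  | 0 => 1
  | n + 1 => mPoch A n * (A + (n : ℂ) • 1)

/-- The Gauss hypergeometric matrix function `₂F₁(A, B; C; x)`. -/
noncomputable def hypF21 {r : ℕ} (A B C : Matrix (Fin r) (Fin r) ℂ) (x : ℂ) :
    Matrix (Fin r) (Fin r) ℂ :=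
  ∑' n : ℕ, ((n.factorial : ℂ)⁻¹ * x ^ n) • (mPoch A n * mPoch B n * (mPoch C n)⁻¹)

namespace HypAux
open Filter
variable {r : ℕ}
local notation "Mat" => Matrix (Fin r) (Fin r) ℂ

lemma mPoch_zero (A : Mat) : mPoch A 0 = 1 := rfl
lemma mPoch_succ (A : Mat) (n : ℕ) : mPoch A (n+1) = mPoch A n * (A + (n : ℂ) • 1) := rfl

lemma commute_mPoch {X A : Mat} (h : X * A = A * X) (n : ℕ) :
    X * mPoch A n = mPoch A n * X := by
  induction n with
  | zero => simp [mPoch_zero]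
  | succ n ih =>
    have h2 : X * (A + (n : ℂ) • 1) = (A + (n : ℂ) • 1) * X := by
      simp [mul_add, add_mul, h, mul_smul_comm, smul_mul_assoc]
    rw [mPoch_succ, ← mul_assoc, ih, mul_assoc, h2, mul_assoc]

lemma mPoch_succ_left (A : Mat) (n : ℕ) :
    mPoch A (n+1) = A * mPoch (A + 1) n := by
  induction n with
  | zero => simp [mPoch_succ, mPoch_zero]
  | succ n ih =>
    have key : (A : Mat) + 1 + (n : ℂ) • 1 = A + ((n:ℂ)+1) • 1 := by
      rw [add_smul, one_smul]; abel
    rw [mPoch_succ, ih, mul_assoc, mPoch_succ (A+1) n, key]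
    push_cast
    rfl

lemma mPoch_shift_sub (A : Mat) (n : ℕ) :
    mPoch (A + 1) (n+1) = mPoch A (n+1) + ((n:ℂ)+1) • mPoch (A + 1) n := by
  have hc : A * (A + 1) = (A + 1) * A := by noncomm_ring
  have key : (A : Mat) + 1 + (n : ℂ) • 1 = A + ((n:ℂ)+1) • 1 := by
    rw [add_smul, one_smul]; abel
  rw [mPoch_succ, key, mul_add, mul_smul_comm, mul_one, mPoch_succ_left, commute_mPoch hc]

lemma isUnit_mPoch {C : Mat} (hC : ∀ n : ℕ, IsUnit (C + (n : ℂ) • (1 : Mat))) (n : ℕ) :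
    IsUnit (mPoch C n) := by
  induction n with
  | zero => simp [mPoch_zero]
  | succ n ih => exact (mPoch_succ C n) ▸ ih.mul (hC n)

lemma inv_mPoch_succ {C : Mat} (n : ℕ) :
    (mPoch C (n+1))⁻¹ = (mPoch (C + 1) n)⁻¹ * C⁻¹ := by
  rw [mPoch_succ_left, Matrix.mul_inv_rev]

lemma commute_inv {X M : Mat} (h : X * M = M * X) (hM : IsUnit M) :
    X * M⁻¹ = M⁻¹ * X := by
  have hd := (Matrix.isUnit_iff_isUnit_det M).mp hM
  calc X * M⁻¹ = M⁻¹ * (M * X) * M⁻¹ := by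
        rw [← mul_assoc, Matrix.nonsing_inv_mul M hd, one_mul]
    _ = M⁻¹ * X * (M * M⁻¹) := by rw [← h]; simp only [mul_assoc]
    _ = M⁻¹ * X := by rw [Matrix.mul_nonsing_inv M hd, mul_one]


section Normed
attribute [local instance] Matrix.linftyOpNormedRing Matrix.linftyOpNormedAlgebra

noncomputable def term (A B C : Mat) (x : ℂ) (n : ℕ) : Mat :=
  ((n.factorial : ℂ)⁻¹ * x ^ n) • (mPoch A n * mPoch B n * (mPoch C n)⁻¹)

section Normed
attribute [local instance] Matrix.linftyOpNormedRing Matrix.linftyOpNormedAlgebra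

lemma summable_term_aux [Nonempty (Fin r)] (A B C : Mat) (x : ℂ)
    (hC : ∀ n : ℕ, IsUnit (C + (n : ℂ) • (1 : Mat)))
    (hx : ‖x‖ < 1) : Summable (term A B C x) := by
  set a : ℝ := ‖A‖ with ha
  set b : ℝ := ‖B‖ with hb
  set c : ℝ := ‖C‖ with hc
  have ha0 : 0 ≤ a := norm_nonneg A
  have hb0 : 0 ≤ b := norm_nonneg B
  have hc0 : 0 ≤ c := norm_nonneg C
  set cc : ℕ → ℝ := fun n => ‖(C + (n : ℂ) • (1 : Mat))⁻¹‖ with hccdef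
  have hcc0 : ∀ n, 0 ≤ cc n := fun n => norm_nonneg _
  set g : ℕ → ℝ := fun n => ‖x‖ ^ n / n.factorial *
    ((∏ k ∈ Finset.range n, (a + k)) * (∏ k ∈ Finset.range n, (b + k)) *
      (∏ k ∈ Finset.range n, cc k)) with hg
  -- nonnegativity of g
  have hprodA : ∀ n, (0:ℝ) ≤ ∏ k ∈ Finset.range n, (a + k) :=
    fun n => Finset.prod_nonneg fun k _ => by positivity
  have hprodB : ∀ n, (0:ℝ) ≤ ∏ k ∈ Finset.range n, (b + k) :=
    fun n => Finset.prod_nonneg fun k _ => by positivity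
  have hprodC : ∀ n, (0:ℝ) ≤ ∏ k ∈ Finset.range n, cc k :=
    fun n => Finset.prod_nonneg fun k _ => hcc0 k
  have hcoef0 : ∀ n : ℕ, (0:ℝ) ≤ ‖x‖ ^ n / n.factorial := fun n =>
    div_nonneg (pow_nonneg (norm_nonneg x) n) (Nat.cast_nonneg _)
  have hg0 : ∀ n, 0 ≤ g n := by
    intro n; rw [hg]
    exact mul_nonneg (hcoef0 n)
      (mul_nonneg (mul_nonneg (hprodA n) (hprodB n)) (hprodC n))
  -- norm bounds on Pochhammer factors
  have hnormshift : ∀ (M : Mat) (n : ℕ), ‖M + (n : ℂ) • (1 : Mat)‖ ≤ ‖M‖ + n := by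
    intro M n
    calc ‖M + (n : ℂ) • (1 : Mat)‖ ≤ ‖M‖ + ‖(n : ℂ) • (1 : Mat)‖ := norm_add_le _ _
      _ = ‖M‖ + n := by rw [norm_smul, norm_one, mul_one, Complex.norm_natCast]
  have hPA : ∀ (M : Mat) (n : ℕ), ‖mPoch M n‖ ≤ ∏ k ∈ Finset.range n, (‖M‖ + k) := by
    intro M n
    induction n with
    | zero => simp [mPoch_zero]
    | succ n ih =>
      rw [mPoch_succ, Finset.prod_range_succ]
      calc ‖mPoch M n * (M + (n : ℂ) • 1)‖ ≤ ‖mPoch M n‖ * ‖M + (n : ℂ) • (1:Mat)‖ :=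
            norm_mul_le _ _
        _ ≤ (∏ k ∈ Finset.range n, (‖M‖ + k)) * (‖M‖ + n) := by
            apply mul_le_mul ih (hnormshift M n) (norm_nonneg _)
            exact Finset.prod_nonneg fun k _ => by positivity
  have hPC : ∀ n : ℕ, ‖(mPoch C n)⁻¹‖ ≤ ∏ k ∈ Finset.range n, cc k := by
    intro n
    induction n with
    | zero => simp [mPoch_zero]
    | succ n ih =>
      rw [mPoch_succ, Matrix.mul_inv_rev, Finset.prod_range_succ]
      calc ‖(C + (n:ℂ) • (1:Mat))⁻¹ * (mPoch C n)⁻¹‖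
          ≤ cc n * ‖(mPoch C n)⁻¹‖ := norm_mul_le _ _
        _ ≤ cc n * ∏ k ∈ Finset.range n, cc k :=
            mul_le_mul_of_nonneg_left ih (hcc0 n)
        _ = (∏ k ∈ Finset.range n, cc k) * cc n := mul_comm _ _
  -- ‖term n‖ ≤ g n
  have hbound : ∀ n, ‖term A B C x n‖ ≤ g n := by
    intro n
    rw [term, norm_smul, hg]
    dsimp only
    have h1 : ‖(n.factorial : ℂ)⁻¹ * x ^ n‖ = ‖x‖ ^ n / n.factorial := by
      rw [norm_mul, norm_inv, norm_pow, Complex.norm_natCast, div_eq_mul_inv, mul_comm]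
    rw [h1]
    have h2 : ‖mPoch A n * mPoch B n * (mPoch C n)⁻¹‖ ≤
        (∏ k ∈ Finset.range n, (a + k)) * (∏ k ∈ Finset.range n, (b + k)) *
          (∏ k ∈ Finset.range n, cc k) := by
      calc ‖mPoch A n * mPoch B n * (mPoch C n)⁻¹‖
          ≤ ‖mPoch A n * mPoch B n‖ * ‖(mPoch C n)⁻¹‖ := norm_mul_le _ _
        _ ≤ (‖mPoch A n‖ * ‖mPoch B n‖) * ‖(mPoch C n)⁻¹‖ := by
            apply mul_le_mul_of_nonneg_right (norm_mul_le _ _) (norm_nonneg _)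
        _ ≤ (∏ k ∈ Finset.range n, (a + k)) * (∏ k ∈ Finset.range n, (b + k)) *
              (∏ k ∈ Finset.range n, cc k) := by
            apply mul_le_mul _ (hPC n) (norm_nonneg _)
              (mul_nonneg (hprodA n) (hprodB n))
            apply mul_le_mul (hPA A n) (hPA B n) (norm_nonneg _) (hprodA n)
    have h3 : (0:ℝ) ≤ ‖x‖ ^ n / n.factorial := by positivity
    exact mul_le_mul_of_nonneg_left h2 h3
  -- inverse norm bound
  have hinv : ∀ n : ℕ, c < n → cc n ≤ 1 / (n - c) := by
    intro n hn
    have hu := (Matrix.isUnit_iff_isUnit_det _).mp (hC n)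
    have hmul : (C + (n : ℂ) • (1:Mat)) * (C + (n : ℂ) • (1:Mat))⁻¹ = 1 :=
      Matrix.mul_nonsing_inv _ hu
    set V : Mat := (C + (n : ℂ) • (1:Mat))⁻¹ with hV
    have hsplit : C * V + (n : ℂ) • V = 1 := by
      rw [← hmul, add_mul, smul_mul_assoc, one_mul]
    have hnV : (n : ℝ) * ‖V‖ ≤ 1 + c * ‖V‖ := by
      have : (n : ℂ) • V = 1 - C * V := by rw [← hsplit]; abel
      calc (n : ℝ) * ‖V‖ = ‖(n : ℂ) • V‖ := by
            rw [norm_smul, Complex.norm_natCast]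
        _ = ‖(1 : Mat) - C * V‖ := by rw [this]
        _ ≤ ‖(1 : Mat)‖ + ‖C * V‖ := norm_sub_le _ _
        _ ≤ 1 + c * ‖V‖ := by
            rw [norm_one]
            exact add_le_add (le_refl 1) (norm_mul_le _ _)
    have hpos : 0 < (n : ℝ) - c := by linarith
    rw [le_div_iff₀ hpos]
    nlinarith [norm_nonneg V]
  -- ratio limit
  set ρ : ℝ := (‖x‖ + 1) / 2 with hρ
  have hxn : ‖x‖ = ‖x‖ := rfl
  have hxρ : ‖x‖ < ρ := by rw [hρ, hxn]; linarith
  have hρ1 : ρ < 1 := by rw [hρ, hxn]; linarith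
  have htend : Tendsto (fun n : ℕ => ‖x‖ * ((a + n) / (n + 1)) * ((b + n) / (n - c)))
      atTop (nhds (‖x‖ * 1 * 1)) := by
    have t0 : Tendsto (fun n : ℕ => ((n : ℝ))) atTop atTop := tendsto_natCast_atTop_atTop
    have tn1 : Tendsto (fun n : ℕ => ((n : ℝ) + 1)) atTop atTop :=
      tendsto_atTop_add_const_right _ 1 t0
    have tnc : Tendsto (fun n : ℕ => ((n : ℝ) - c)) atTop atTop :=
      tendsto_atTop_add_const_right _ (-c) t0
    have t1 : Tendsto (fun n : ℕ => (a + n) / (n + 1)) atTop (nhds 1) := by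
      have : ∀ n : ℕ, (a + n) / ((n:ℝ) + 1) = (a - 1) / (n + 1) + 1 := by
        intro n
        have : ((n:ℝ) + 1) ≠ 0 := by positivity
        field_simp
        try ring
      have tt : Tendsto (fun n : ℕ => (a - 1) / ((n:ℝ) + 1) + 1) atTop (nhds (0 + 1)) :=
        (tendsto_const_nhds.div_atTop tn1).add tendsto_const_nhds
      rw [zero_add] at tt
      exact Tendsto.congr (fun n => (this n).symm) tt
    have t2 : Tendsto (fun n : ℕ => (b + n) / (n - c)) atTop (nhds 1) := by
      have hev : ∀ᶠ n : ℕ in atTop, (b + c) / ((n:ℝ) - c) + 1 = (b + n) / (n - c) := by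
        filter_upwards [tnc.eventually_gt_atTop 0] with n hn
        have : ((n:ℝ) - c) ≠ 0 := ne_of_gt hn
        field_simp
        try ring
      have tt : Tendsto (fun n : ℕ => (b + c) / ((n:ℝ) - c) + 1) atTop (nhds (0 + 1)) :=
        (tendsto_const_nhds.div_atTop tnc).add tendsto_const_nhds
      rw [zero_add] at tt
      exact Tendsto.congr' hev tt
    exact (tendsto_const_nhds.mul t1).mul t2
  have hev : ∀ᶠ n : ℕ in atTop, ‖g (n + 1)‖ ≤ ρ * ‖g n‖ := by
    have h1 : ∀ᶠ n : ℕ in atTop,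
        ‖x‖ * ((a + n) / (n + 1)) * ((b + n) / (n - c)) < ρ := by
      apply htend.eventually_lt_const
      rw [mul_one, mul_one]; exact hxρ
    have h2 : ∀ᶠ n : ℕ in atTop, c < (n : ℝ) :=
      tendsto_natCast_atTop_atTop.eventually_gt_atTop c
    filter_upwards [h1, h2] with n h1n h2n
    have hpos : (0:ℝ) < (n:ℝ) - c := by linarith
    have hn1 : (0:ℝ) < (n:ℝ) + 1 := by positivity
    -- g (n+1) = g n * (‖x‖ * (a+n) * (b+n) * cc n / (n+1))
    have hgs : g (n + 1) = g n * (‖x‖ * (a + n) * (b + n) * cc n / (n + 1)) := by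
      rw [hg]
      dsimp only
      rw [Finset.prod_range_succ, Finset.prod_range_succ, Finset.prod_range_succ,
        pow_succ, Nat.factorial_succ]
      have hfac : (0:ℝ) < n.factorial := by positivity
      push_cast
      field_simp
    have hq : ‖x‖ * (a + n) * (b + n) * cc n / (n + 1) ≤ ρ := by
      have hK : (0:ℝ) ≤ ‖x‖ * (a + n) * (b + n) / ((n:ℝ) + 1) := by positivity
      calc ‖x‖ * (a + n) * (b + n) * cc n / (n + 1)
          = (‖x‖ * (a + n) * (b + n) / ((n:ℝ) + 1)) * cc n := by ring
        _ ≤ (‖x‖ * (a + n) * (b + n) / ((n:ℝ) + 1)) * (1 / ((n:ℝ) - c)) :=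
            mul_le_mul_of_nonneg_left (hinv n h2n) hK
        _ = ‖x‖ * ((a + n) / (n + 1)) * ((b + n) / (n - c)) := by ring
        _ ≤ ρ := le_of_lt h1n
    rw [Real.norm_eq_abs, Real.norm_eq_abs, abs_of_nonneg (hg0 _), abs_of_nonneg (hg0 _),
      hgs]
    calc g n * (‖x‖ * (a + n) * (b + n) * cc n / (n + 1)) ≤ g n * ρ :=
          mul_le_mul_of_nonneg_left hq (hg0 n)
      _ = ρ * g n := mul_comm _ _
  have hgsum : Summable g := summable_of_ratio_norm_eventually_le hρ1 hev
  exact Summable.of_norm_bounded hgsum hbound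


end Normed


lemma summable_term (A B C : Mat) (x : ℂ)
    (hC : ∀ n : ℕ, IsUnit (C + (n : ℂ) • (1 : Mat)))
    (hx : ‖x‖ < 1) : Summable (term A B C x) := by
  rcases Nat.eq_zero_or_pos r with hr | hr
  · subst hr
    haveI : Subsingleton (Matrix (Fin 0) (Fin 0) ℂ) := by
      constructor; intro a b; ext i; exact absurd i.2 (Nat.not_lt_zero _)
    have : term A B C x = fun _ => 0 := funext fun n => Subsingleton.elim _ _
    rw [this]; exact summable_zero
  · haveI : Nonempty (Fin r) := ⟨⟨0, hr⟩⟩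
    exact summable_term_aux A B C x hC hx

lemma cast_shift (M : Mat) (n : ℕ) : M + 1 + (n : ℂ) • (1:Mat) = M + ((n:ℂ)+1) • 1 := by
  rw [add_smul, one_smul]; abel

lemma hC_shift {C : Mat} (hC : ∀ n : ℕ, IsUnit (C + (n : ℂ) • (1 : Mat))) :
    ∀ n : ℕ, IsUnit (C + 1 + (n : ℂ) • (1 : Mat)) := by
  intro n
  rw [cast_shift]
  have := hC (n+1)
  rwa [Nat.cast_add, Nat.cast_one] at this

lemma term_succ_shift (A B C : Mat) (x : ℂ)
    (hC : ∀ n : ℕ, IsUnit (C + (n : ℂ) • (1 : Mat))) (hBC : B * C = C * B) (n : ℕ) :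
    term (A+1) B C x (n+1) =
      term A B C x (n+1) + x • (term (A+1) (B+1) (C+1) x n * B * C⁻¹) := by
  have hb : B * (B+1) = (B+1) * B := by noncomm_ring
  have hbc1 : B * (C+1) = (C+1) * B := by rw [mul_add, add_mul, hBC, mul_one, one_mul]
  have hcomm1 : B * mPoch (B+1) n = mPoch (B+1) n * B := commute_mPoch hb n
  have hcomm2 : B * (mPoch (C+1) n)⁻¹ = (mPoch (C+1) n)⁻¹ * B :=
    commute_inv (commute_mPoch hbc1 n) (isUnit_mPoch (hC_shift hC) n)
  have hmat : mPoch (A+1) n * mPoch B (n+1) * (mPoch C (n+1))⁻¹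
      = mPoch (A+1) n * mPoch (B+1) n * (mPoch (C+1) n)⁻¹ * B * C⁻¹ := by
    rw [mPoch_succ_left B n, inv_mPoch_succ]
    calc mPoch (A+1) n * (B * mPoch (B+1) n) * ((mPoch (C+1) n)⁻¹ * C⁻¹)
        = mPoch (A+1) n * (mPoch (B+1) n * (B * (mPoch (C+1) n)⁻¹ * C⁻¹)) := by
          rw [hcomm1]; simp only [mul_assoc]
      _ = mPoch (A+1) n * mPoch (B+1) n * (mPoch (C+1) n)⁻¹ * B * C⁻¹ := by
          rw [hcomm2]; simp only [mul_assoc]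
  have h2 : ((n:ℂ)+1) ≠ 0 := Nat.cast_add_one_ne_zero n
  have h3 : (n.factorial : ℂ) ≠ 0 := Nat.cast_ne_zero.mpr n.factorial_ne_zero
  have hcoef : (((n+1).factorial : ℂ))⁻¹ * x^(n+1) * ((n:ℂ)+1)
      = x * ((n.factorial:ℂ)⁻¹ * x^n) := by
    have h1 : (((n+1).factorial : ℕ) : ℂ) = ((n:ℂ)+1) * (n.factorial : ℂ) := by
      rw [Nat.factorial_succ]; push_cast; ring
    rw [h1]
    field_simp
    ring
  simp only [term]
  rw [mPoch_shift_sub, add_mul, add_mul, smul_add]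
  congr 1
  rw [smul_mul_assoc, smul_mul_assoc, smul_smul, hcoef, hmat, smul_mul_assoc,
    smul_mul_assoc, smul_smul]

lemma hypF21_eq (A B C : Mat) (x : ℂ) : hypF21 A B C x = ∑' n, term A B C x n := rfl

lemma contiguous (A B C : Mat) (x : ℂ)
    (hC : ∀ n : ℕ, IsUnit (C + (n : ℂ) • (1 : Mat))) (hBC : B * C = C * B)
    (hx : ‖x‖ < 1) :
    hypF21 (A + 1) B C x =
      hypF21 A B C x + x • (hypF21 (A+1) (B+1) (C+1) x * B * C⁻¹) := by
  have S1 : Summable (term (A+1) B C x) := summable_term _ _ _ _ hC hx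
  have S2 : Summable (term A B C x) := summable_term _ _ _ _ hC hx
  have S3 : Summable (term (A+1) (B+1) (C+1) x) := summable_term _ _ _ _ (hC_shift hC) hx
  have S3b : Summable (fun n => term (A+1) (B+1) (C+1) x n * B) := S3.mul_right B
  have S3c : Summable (fun n => term (A+1) (B+1) (C+1) x n * B * C⁻¹) := S3b.mul_right C⁻¹
  have S3d : Summable (fun n => x • (term (A+1) (B+1) (C+1) x n * B * C⁻¹)) :=
    S3c.const_smul x
  have S2s : Summable (fun n => term A B C x (n+1)) := by
    rw [← summable_nat_add_iff 1] at S2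
    exact S2
  have hzero : term (A+1) B C x 0 = term A B C x 0 := by simp [term, mPoch_zero]
  calc hypF21 (A+1) B C x = ∑' n, term (A+1) B C x n := rfl
    _ = term (A+1) B C x 0 + ∑' n, term (A+1) B C x (n+1) := S1.tsum_eq_zero_add
    _ = term A B C x 0 + ∑' n, (term A B C x (n+1)
          + x • (term (A+1) (B+1) (C+1) x n * B * C⁻¹)) := by
        rw [hzero]
        exact congrArg _ (tsum_congr fun n => term_succ_shift A B C x hC hBC n)
    _ = term A B C x 0 + (∑' n, term A B C x (n+1)
          + ∑' n, x • (term (A+1) (B+1) (C+1) x n * B * C⁻¹)) := by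
        rw [Summable.tsum_add S2s S3d]
    _ = (term A B C x 0 + ∑' n, term A B C x (n+1))
          + x • ((∑' n, term (A+1) (B+1) (C+1) x n) * B * C⁻¹) := by
        rw [tsum_const_smul'' x, Summable.tsum_mul_right C⁻¹ S3b,
          Summable.tsum_mul_right B S3, add_assoc]
    _ = hypF21 A B C x + x • (hypF21 (A+1) (B+1) (C+1) x * B * C⁻¹) := by
        rw [hypF21_eq, hypF21_eq, S2.tsum_eq_zero_add]

end Normed
end HypAux

theorem hypF21_recursion_A {r : ℕ} (A B C : Matrix (Fin r) (Fin r) ℂ) (x : ℂ)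
    (hC : ∀ n : ℕ, IsUnit (C + (n : ℂ) • (1 : Matrix (Fin r) (Fin r) ℂ)))
    (hBC : B * C = C * B) (hx : ‖x‖ < 1) :
    ((∀ k : ℕ, IsUnit (A + (k : ℂ) • (1 : Matrix (Fin r) (Fin r) ℂ))) →
      ∀ s : ℕ,
        hypF21 (A + (s : ℂ) • 1) B C x =
          hypF21 A B C x +
            x • ((∑ k ∈ Finset.Icc 1 s, hypF21 (A + (k : ℂ) • 1) (B + 1) (C + 1) x) * B * C⁻¹)) ∧
    ((∀ k : ℕ, IsUnit (A + (k : ℂ) • (1 : Matrix (Fin r) (Fin r) ℂ))) →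
      ∀ s : ℕ,
        (∀ k : ℕ, 1 ≤ k → k ≤ s → IsUnit (A - (k : ℂ) • (1 : Matrix (Fin r) (Fin r) ℂ))) →
        hypF21 (A - (s : ℂ) • 1) B C x =
          hypF21 A B C x -
            x • ((∑ k ∈ Finset.range s, hypF21 (A - (k : ℂ) • 1) (B + 1) (C + 1) x) * B * C⁻¹)) := by
  constructor
  · intro _ s
    induction s with
    | zero => simp
    | succ s ih =>
      have hcast : A + ((s+1 : ℕ) : ℂ) • (1 : Matrix (Fin r) (Fin r) ℂ)
          = (A + (s : ℂ) • 1) + 1 := by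
        push_cast
        rw [add_smul, one_smul, add_assoc]
      rw [hcast, HypAux.contiguous _ B C x hC hBC hx, ih,
        Finset.sum_Icc_succ_top (by omega : 1 ≤ s + 1), hcast,
        add_mul, add_mul, smul_add]
      abel
  · intro _ s
    induction s with
    | zero => intro _; simp
    | succ s ih =>
      intro hk
      have ih' := ih (fun k h1 h2 => hk k h1 (h2.trans (Nat.le_succ s)))
      have hcast : A - ((s+1 : ℕ) : ℂ) • (1 : Matrix (Fin r) (Fin r) ℂ) + 1
          = A - (s : ℂ) • 1 := by
        push_cast
        rw [add_smul, one_smul]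
        abel
      have hrec := HypAux.contiguous (A - ((s+1 : ℕ) : ℂ) • 1) B C x hC hBC hx
      rw [hcast] at hrec
      have hstep : hypF21 (A - ((s+1 : ℕ) : ℂ) • 1) B C x
          = hypF21 (A - (s : ℂ) • 1) B C x
            - x • (hypF21 (A - (s : ℂ) • 1) (B+1) (C+1) x * B * C⁻¹) :=
        eq_sub_of_add_eq hrec.symm
      rw [hstep, ih', Finset.sum_range_succ, add_mul, add_mul, smul_add]
      abel
end

section
/- Let A, B, C ∈ ℂ^{r×r} with C + nI invertible for all integers n ≥ 0, let B and C commute, and let |x| < 1. (i) If A + kI is invertible for all integers k ≥ 0, then for every non-negative integer s: ₂F₁(A+sI, B; C; x) = ∑_{k=0}^{s} (s choose k) x^k ·[₂F₁(A+kI, B+kI; C+kI; x)]·(B)_k·(C)_k⁻¹. (ii) If moreover A − kI is invertible for all integers 1 ≤ k ≤ s, then ₂F₁(A−sI, B; C; x) = ∑_{k=0}^{s} (s choose k) (−x)^k ·[₂F₁(A, B+kI; C+kI; x)]·(B)_k·(C)_k⁻¹. -/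
/-- The general term of the hypergeometric series. -/
noncomputable def hterm {r : ℕ} (A B C : Matrix (Fin r) (Fin r) ℂ) (x : ℂ) (n : ℕ) :
    Matrix (Fin r) (Fin r) ℂ :=
  ((n.factorial : ℂ)⁻¹ * x ^ n) • (mPoch A n * mPoch B n * (mPoch C n)⁻¹)

lemma hypF21_eq {r : ℕ} (A B C : Matrix (Fin r) (Fin r) ℂ) (x : ℂ) :
    hypF21 A B C x = ∑' n : ℕ, hterm A B C x n := rfl

section Alg
variable {r : ℕ}

local notation "MM" => Matrix (Fin r) (Fin r) ℂ

lemma hyp_commute_smul_one (X : MM) (a : ℂ) : Commute X (a • 1) :=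
  (Commute.one_right X).smul_right a

lemma hyp_commute_mPoch {X A : MM} (h : Commute X A) (n : ℕ) : Commute X (mPoch A n) := by
  induction n with
  | zero => exact Commute.one_right X
  | succ n ih => exact ih.mul_right (h.add_right (hyp_commute_smul_one X _))

lemma hyp_isUnit_mPoch {C : MM} (hC : ∀ n : ℕ, IsUnit (C + (n : ℂ) • 1)) (n : ℕ) :
    IsUnit (mPoch C n) := by
  induction n with
  | zero => exact isUnit_one
  | succ n ih => exact ih.mul (hC n)

lemma hyp_commute_inv {X Y : MM} (h : Commute X Y) (hY : IsUnit Y) : Commute X Y⁻¹ := by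
  obtain ⟨u, rfl⟩ := hY
  rw [← Matrix.coe_units_inv]
  exact h.units_inv_right

lemma mPoch_succ_left (A : MM) (n : ℕ) : mPoch A (n + 1) = A * mPoch (A + 1) n := by
  induction n with
  | zero => simp [mPoch]
  | succ n ih =>
    have h1 : A + ((n + 1 : ℕ) : ℂ) • 1 = A + 1 + (n : ℂ) • (1 : MM) := by
      push_cast
      rw [add_smul, one_smul]
      abel
    rw [show mPoch A (n+2) = mPoch A (n+1) * (A + ((n+1:ℕ) : ℂ) • 1) from rfl, ih,
      show mPoch (A+1) (n+1) = mPoch (A+1) n * (A + 1 + (n : ℂ) • 1) from rfl,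
      mul_assoc, h1]

lemma hC_shift {C : MM} (hC : ∀ n : ℕ, IsUnit (C + (n : ℂ) • 1)) (n : ℕ) :
    IsUnit (C + 1 + (n : ℂ) • (1 : MM)) := by
  have := hC (n + 1)
  have h1 : C + ((n + 1 : ℕ) : ℂ) • 1 = C + 1 + (n : ℂ) • (1 : MM) := by
    push_cast
    rw [add_smul, one_smul]
    abel
  rwa [h1] at this

/-- `(B)_{k+1} (C)_{k+1}⁻¹ = (B+1)_k (C+1)_k⁻¹ B C⁻¹` -/
lemma poch_ratio {B C : MM} (hBC : B * C = C * B)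
    (hC : ∀ n : ℕ, IsUnit (C + (n : ℂ) • 1)) (k : ℕ) :
    mPoch B (k + 1) * (mPoch C (k + 1))⁻¹ =
      mPoch (B + 1) k * (mPoch (C + 1) k)⁻¹ * B * C⁻¹ := by
  have hBB1 : Commute B (mPoch (B + 1) k) :=
    hyp_commute_mPoch ((Commute.refl B).add_right (Commute.one_right B)) k
  have hBC1inv : Commute B (mPoch (C + 1) k)⁻¹ :=
    hyp_commute_inv
      (hyp_commute_mPoch ((show Commute B C from hBC).add_right (Commute.one_right B)) k)
      (hyp_isUnit_mPoch (hC_shift hC) k)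
  rw [mPoch_succ_left B k, mPoch_succ_left C k, Matrix.mul_inv_rev]
  rw [← mul_assoc, hBB1.eq, mul_assoc (mPoch (B + 1) k) B, hBC1inv.eq, ← mul_assoc]

/-- `(A+1)_{n+1} - (A)_{n+1} = (n+1) • (A+1)_n` -/
lemma poch_diff (A : MM) (n : ℕ) :
    mPoch (A + 1) (n + 1) - mPoch A (n + 1) = ((n : ℂ) + 1) • mPoch (A + 1) n := by
  have hc : Commute (mPoch (A + 1) n) A :=
    (hyp_commute_mPoch ((Commute.refl A).add_right (Commute.one_right A)) n).symm
  have e1 : mPoch (A + 1) (n + 1) = mPoch (A + 1) n * (A + 1 + (n : ℂ) • 1) := rfl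
  rw [e1, mPoch_succ_left A n, mul_add, mul_add, hc.eq]
  have : mPoch (A + 1) n * (1 : MM) + mPoch (A + 1) n * (n : ℂ) • (1 : MM)
      = ((n : ℂ) + 1) • mPoch (A + 1) n := by
    rw [mul_one, Matrix.mul_smul, mul_one, add_smul, one_smul, add_comm]
  rw [add_assoc, this]
  abel

end Alg

section Norm
variable {r : ℕ}
local notation "MM" => Matrix (Fin r) (Fin r) ℂ

attribute [local instance] Matrix.linftyOpNormedAddCommGroup Matrix.linftyOpNormedRing
  Matrix.linftyOpNormedAlgebra Matrix.linftyOpNormedSpace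

lemma hyp_norm_mPoch_le [Nonempty (Fin r)] (A : MM) (n : ℕ) :
    ‖mPoch A n‖ ≤ ∏ k ∈ Finset.range n, (‖A‖ + k + 1) := by
  induction n with
  | zero => simp [mPoch]
  | succ n ih =>
    rw [show mPoch A (n + 1) = mPoch A n * (A + (n : ℂ) • 1) from rfl,
      Finset.prod_range_succ]
    have h1 : ‖A + (n : ℂ) • (1 : MM)‖ ≤ ‖A‖ + n + 1 := by
      calc ‖A + (n : ℂ) • (1 : MM)‖ ≤ ‖A‖ + ‖(n : ℂ) • (1 : MM)‖ := norm_add_le _ _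
        _ = ‖A‖ + n := by rw [norm_smul, norm_one, mul_one, Complex.norm_natCast]
        _ ≤ ‖A‖ + n + 1 := by linarith
    calc ‖mPoch A n * (A + (n : ℂ) • 1)‖ ≤ ‖mPoch A n‖ * ‖A + (n : ℂ) • (1 : MM)‖ :=
          norm_mul_le _ _
      _ ≤ (∏ k ∈ Finset.range n, (‖A‖ + k + 1)) * (‖A‖ + n + 1) := by
          apply mul_le_mul ih h1 (norm_nonneg _)
          exact Finset.prod_nonneg fun k _ => by positivity

lemma hyp_norm_mPoch_inv_le [Nonempty (Fin r)] (C : MM) (n : ℕ) :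
    ‖(mPoch C n)⁻¹‖ ≤ ∏ k ∈ Finset.range n, ‖(C + (k : ℂ) • (1 : MM))⁻¹‖ := by
  induction n with
  | zero => simp [mPoch, inv_one]
  | succ n ih =>
    rw [show mPoch C (n + 1) = mPoch C n * (C + (n : ℂ) • 1) from rfl,
      Matrix.mul_inv_rev, Finset.prod_range_succ, mul_comm (∏ k ∈ Finset.range n, _)]
    calc ‖(C + (n : ℂ) • (1 : MM))⁻¹ * (mPoch C n)⁻¹‖
        ≤ ‖(C + (n : ℂ) • (1 : MM))⁻¹‖ * ‖(mPoch C n)⁻¹‖ := norm_mul_le _ _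
      _ ≤ ‖(C + (n : ℂ) • (1 : MM))⁻¹‖ * ∏ k ∈ Finset.range n, ‖(C + (k : ℂ) • (1 : MM))⁻¹‖ :=
          mul_le_mul_of_nonneg_left ih (norm_nonneg _)

lemma hyp_norm_inv_le [Nonempty (Fin r)] {C : MM} (hC : ∀ n : ℕ, IsUnit (C + (n : ℂ) • 1))
    {n : ℕ} (hn : ‖C‖ < n) : ‖(C + (n : ℂ) • (1 : MM))⁻¹‖ ≤ ((n : ℝ) - ‖C‖)⁻¹ := by
  set u := (C + (n : ℂ) • (1 : MM))⁻¹ with hu_def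
  have hu : (C + (n : ℂ) • 1) * u = 1 :=
    Matrix.mul_nonsing_inv _ ((Matrix.isUnit_iff_isUnit_det _).mp (hC n))
  rw [add_mul, Matrix.smul_mul, one_mul] at hu
  have h2 : (n : ℂ) • u = 1 - C * u := eq_sub_of_add_eq' hu
  have h3 : (n : ℝ) * ‖u‖ = ‖(n : ℂ) • u‖ := by
    rw [norm_smul, Complex.norm_natCast]
  have h4 : ‖(1 : MM) - C * u‖ ≤ 1 + ‖C‖ * ‖u‖ := by
    calc ‖(1 : MM) - C * u‖ ≤ ‖(1 : MM)‖ + ‖C * u‖ := norm_sub_le _ _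
      _ ≤ 1 + ‖C‖ * ‖u‖ := by rw [norm_one]; exact add_le_add le_rfl (norm_mul_le C u)
  have h5 : (n : ℝ) * ‖u‖ ≤ 1 + ‖C‖ * ‖u‖ := by rw [h3, h2]; exact h4
  have h6 : ‖u‖ * ((n : ℝ) - ‖C‖) ≤ 1 := by nlinarith
  rw [← one_div]
  exact (le_div_iff₀ (by linarith)).mpr h6

open Filter Topology in
lemma hyp_summable_term (hr : 0 < r) (A B C : MM)
    (hC : ∀ n : ℕ, IsUnit (C + (n : ℂ) • 1)) {x : ℂ} (hx : ‖x‖ < 1) :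
    Summable (hterm A B C x) := by
  haveI : Nonempty (Fin r) := ⟨⟨0, hr⟩⟩
  set l : ℝ := (1 + ‖x‖) / 2 with hl_def
  have habs : (0 : ℝ) ≤ ‖x‖ := norm_nonneg x
  have hxl : ‖x‖ < l := by rw [hl_def]; linarith
  have hl1 : l < 1 := by rw [hl_def]; linarith
  set g : ℕ → ℝ := fun n => ‖x‖ ^ n * ((n.factorial : ℝ))⁻¹ *
    ∏ k ∈ Finset.range n,
      ((‖A‖ + k + 1) * ((‖B‖ + k + 1) * ‖(C + (k : ℂ) • (1 : MM))⁻¹‖)) with hg_def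
  have hg_nonneg : ∀ n, 0 ≤ g n := by
    intro n
    apply mul_nonneg (mul_nonneg (by positivity) (by positivity))
    exact Finset.prod_nonneg fun k _ => by positivity
  have hbound : ∀ n : ℕ, ‖hterm A B C x n‖ ≤ g n := by
    intro n
    rw [hterm, norm_smul]
    have hsc : ‖(n.factorial : ℂ)⁻¹ * x ^ n‖ = ((n.factorial : ℝ))⁻¹ * ‖x‖ ^ n := by
      rw [norm_mul, norm_inv, norm_pow, Complex.norm_natCast]
    rw [hsc]
    have h1 : ‖mPoch A n * mPoch B n * (mPoch C n)⁻¹‖ ≤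
        ∏ k ∈ Finset.range n,
          ((‖A‖ + k + 1) * ((‖B‖ + k + 1) * ‖(C + (k : ℂ) • (1 : MM))⁻¹‖)) := by
      have pA := hyp_norm_mPoch_le A n
      have pB := hyp_norm_mPoch_le B n
      have pC := hyp_norm_mPoch_inv_le C n
      calc ‖mPoch A n * mPoch B n * (mPoch C n)⁻¹‖
          ≤ ‖mPoch A n * mPoch B n‖ * ‖(mPoch C n)⁻¹‖ := norm_mul_le _ _
        _ ≤ ‖mPoch A n‖ * ‖mPoch B n‖ * ‖(mPoch C n)⁻¹‖ :=
            mul_le_mul_of_nonneg_right (norm_mul_le _ _) (norm_nonneg _)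
        _ ≤ (∏ k ∈ Finset.range n, (‖A‖ + k + 1)) * (∏ k ∈ Finset.range n, (‖B‖ + k + 1)) *
              ∏ k ∈ Finset.range n, ‖(C + (k : ℂ) • (1 : MM))⁻¹‖ := by
            exact mul_le_mul
              (mul_le_mul pA pB (norm_nonneg _) (Finset.prod_nonneg fun k _ => by positivity))
              pC (norm_nonneg _)
              (mul_nonneg (Finset.prod_nonneg fun k _ => by positivity)
                (Finset.prod_nonneg fun k _ => by positivity))
        _ = ∏ k ∈ Finset.range n,
              ((‖A‖ + k + 1) * ((‖B‖ + k + 1) * ‖(C + (k : ℂ) • (1 : MM))⁻¹‖)) := by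
            rw [← Finset.prod_mul_distrib, ← Finset.prod_mul_distrib]
            exact Finset.prod_congr rfl fun k _ => by ring
    calc (n.factorial : ℝ)⁻¹ * ‖x‖ ^ n * ‖mPoch A n * mPoch B n * (mPoch C n)⁻¹‖
        ≤ (n.factorial : ℝ)⁻¹ * ‖x‖ ^ n *
            ∏ k ∈ Finset.range n,
              ((‖A‖ + k + 1) * ((‖B‖ + k + 1) * ‖(C + (k : ℂ) • (1 : MM))⁻¹‖)) :=
          mul_le_mul_of_nonneg_left h1 (by positivity)
      _ = g n := by rw [hg_def]; ring
  have t0 : Tendsto (fun n : ℕ => ((n : ℝ) + 1)) atTop atTop :=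
    tendsto_atTop_add_const_right atTop 1 tendsto_natCast_atTop_atTop
  have t3 : Tendsto (fun n : ℕ => ((n : ℝ) - ‖C‖)) atTop atTop :=
    tendsto_atTop_add_const_right atTop (-‖C‖) tendsto_natCast_atTop_atTop
  have t1 : Tendsto (fun n : ℕ => (‖A‖ + n + 1) / ((n : ℝ) + 1)) atTop (𝓝 1) := by
    have h := (t0.inv_tendsto_atTop).const_mul ‖A‖
    have h' : Tendsto (fun n : ℕ => ‖A‖ * ((n : ℝ) + 1)⁻¹ + 1) atTop (𝓝 (‖A‖ * 0 + 1)) :=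
      h.add tendsto_const_nhds
    rw [mul_zero, zero_add] at h'
    apply h'.congr
    intro n
    have : ((n : ℝ) + 1) ≠ 0 := by positivity
    field_simp
    ring
  have t2 : Tendsto (fun n : ℕ => (‖B‖ + n + 1) / ((n : ℝ) - ‖C‖)) atTop (𝓝 1) := by
    have h := (t3.inv_tendsto_atTop).const_mul (‖B‖ + 1 + ‖C‖)
    have h' : Tendsto (fun n : ℕ => (‖B‖ + 1 + ‖C‖) * ((n : ℝ) - ‖C‖)⁻¹ + 1) atTop
        (𝓝 ((‖B‖ + 1 + ‖C‖) * 0 + 1)) := h.add tendsto_const_nhds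
    rw [mul_zero, zero_add] at h'
    apply h'.congr'
    filter_upwards [t3.eventually_gt_atTop 0] with n hn
    have : ((n : ℝ) - ‖C‖) ≠ 0 := ne_of_gt hn
    field_simp
    ring
  have tfin : Tendsto (fun n : ℕ =>
      ‖x‖ * ((‖A‖ + n + 1) / ((n : ℝ) + 1)) * ((‖B‖ + n + 1) / ((n : ℝ) - ‖C‖)))
      atTop (𝓝 (‖x‖ * 1 * 1)) := (tendsto_const_nhds.mul t1).mul t2
  rw [mul_one, mul_one] at tfin
  have ev1 : ∀ᶠ n : ℕ in atTop,
      ‖x‖ * ((‖A‖ + n + 1) / ((n : ℝ) + 1)) * ((‖B‖ + n + 1) / ((n : ℝ) - ‖C‖)) < l :=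
    tfin.eventually_lt_const hxl
  have ev2 : ∀ᶠ n : ℕ in atTop, ‖C‖ < (n : ℝ) :=
    tendsto_natCast_atTop_atTop.eventually_gt_atTop ‖C‖
  have hg : Summable g := by
    apply summable_of_ratio_norm_eventually_le hl1
    filter_upwards [ev1, ev2] with n h1 h2
    have hCn : (0:ℝ) < (n : ℝ) - ‖C‖ := by linarith
    have hw := hyp_norm_inv_le hC h2
    set w : ℝ := ‖(C + (n : ℂ) • (1 : MM))⁻¹‖ with hw_def
    have hw0 : 0 ≤ w := norm_nonneg _
    have hstep : g (n + 1) =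
        g n * (‖x‖ * ((n : ℝ) + 1)⁻¹ * ((‖A‖ + n + 1) * ((‖B‖ + n + 1) * w))) := by
      rw [hg_def]
      simp only [Finset.prod_range_succ, Nat.factorial_succ, Nat.cast_mul, mul_inv, pow_succ,
        Nat.cast_add, Nat.cast_one]
      ring
    have hratio : ‖x‖ * ((n : ℝ) + 1)⁻¹ * ((‖A‖ + n + 1) * ((‖B‖ + n + 1) * w)) ≤ l := by
      have hle : ‖x‖ * ((n : ℝ) + 1)⁻¹ * ((‖A‖ + n + 1) * ((‖B‖ + n + 1) * w))
          ≤ ‖x‖ * ((‖A‖ + n + 1) / ((n : ℝ) + 1)) *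
              ((‖B‖ + n + 1) / ((n : ℝ) - ‖C‖)) := by
        rw [div_eq_mul_inv, div_eq_mul_inv]
        have hA1 : (0:ℝ) ≤ ‖A‖ + n + 1 := by positivity
        have hB1 : (0:ℝ) ≤ ‖B‖ + n + 1 := by positivity
        calc ‖x‖ * ((n : ℝ) + 1)⁻¹ * ((‖A‖ + n + 1) * ((‖B‖ + n + 1) * w))
            ≤ ‖x‖ * ((n : ℝ) + 1)⁻¹ *
              ((‖A‖ + n + 1) * ((‖B‖ + n + 1) * ((n : ℝ) - ‖C‖)⁻¹)) := by
              apply mul_le_mul_of_nonneg_left _ (by positivity)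
              apply mul_le_mul_of_nonneg_left _ hA1
              exact mul_le_mul_of_nonneg_left hw hB1
          _ = ‖x‖ * ((‖A‖ + n + 1) * ((n : ℝ) + 1)⁻¹) *
              ((‖B‖ + n + 1) * ((n : ℝ) - ‖C‖)⁻¹) := by ring
      exact le_of_lt (lt_of_le_of_lt hle h1)
    rw [Real.norm_of_nonneg (hg_nonneg (n + 1)), Real.norm_of_nonneg (hg_nonneg n), hstep,
      mul_comm l (g n)]
    exact mul_le_mul_of_nonneg_left hratio (hg_nonneg n)
  exact Summable.of_norm_bounded hg hbound

lemma hyp_key_term (A B C : MM) (hBC : B * C = C * B)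
    (hC : ∀ n : ℕ, IsUnit (C + (n : ℂ) • 1)) (x : ℂ) (n : ℕ) :
    hterm (A + 1) B C x (n + 1) - hterm A B C x (n + 1)
      = x • (hterm (A + 1) (B + 1) (C + 1) x n * B * C⁻¹) := by
  rw [hterm, hterm, hterm, ← smul_sub, ← sub_mul, ← sub_mul, poch_diff,
    smul_mul_assoc, smul_mul_assoc, smul_smul, smul_mul_assoc, smul_mul_assoc, smul_smul,
    mul_assoc (mPoch (A + 1) n), poch_ratio hBC hC n]
  have hsc : ((n + 1).factorial : ℂ)⁻¹ * x ^ (n + 1) * ((n : ℂ) + 1)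
      = x * ((n.factorial : ℂ)⁻¹ * x ^ n) := by
    have h0 : ((n.factorial : ℂ)) ≠ 0 := Nat.cast_ne_zero.mpr n.factorial_ne_zero
    have h1 : ((n : ℂ) + 1) ≠ 0 := by
      have := Nat.cast_ne_zero (R := ℂ).mpr (Nat.succ_ne_zero n)
      push_cast at this
      simpa using this
    rw [Nat.factorial_succ]
    push_cast
    field_simp
    ring
  rw [hsc]
  congr 1
  simp only [mul_assoc]

open Filter Topology in
lemma hyp_contiguous (hr : 0 < r) (A B C : MM)
    (hC : ∀ n : ℕ, IsUnit (C + (n : ℂ) • 1)) (hBC : B * C = C * B)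
    {x : ℂ} (hx : ‖x‖ < 1) :
    hypF21 (A + 1) B C x =
      hypF21 A B C x + x • (hypF21 (A + 1) (B + 1) (C + 1) x * B * C⁻¹) := by
  have S1 := hyp_summable_term hr (A + 1) B C hC hx
  have S2 := hyp_summable_term hr A B C hC hx
  have S3 := hyp_summable_term hr (A + 1) (B + 1) (C + 1) (hC_shift hC) hx
  have S4 : Summable fun n => hterm (A + 1) (B + 1) (C + 1) x n * B * C⁻¹ :=
    (S3.mul_right B).mul_right C⁻¹
  have hEq : hypF21 (A + 1) B C x - hypF21 A B C x
      = x • (hypF21 (A + 1) (B + 1) (C + 1) x * B * C⁻¹) := by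
    rw [hypF21_eq, hypF21_eq, hypF21_eq, ← Summable.tsum_sub S1 S2]
    have h0 : (∑ i ∈ Finset.range 1, (hterm (A + 1) B C x i - hterm A B C x i))
        + ∑' i : ℕ, (hterm (A + 1) B C x (i + 1) - hterm A B C x (i + 1))
        = ∑' i : ℕ, (hterm (A + 1) B C x i - hterm A B C x i) :=
      Summable.sum_add_tsum_nat_add 1 (S1.sub S2)
    have hd0 : hterm (A + 1) B C x 0 - hterm A B C x 0 = 0 := by
      simp [hterm, mPoch]
    rw [← h0, Finset.sum_range_one, hd0, zero_add]
    calc ∑' i : ℕ, (hterm (A + 1) B C x (i + 1) - hterm A B C x (i + 1))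
        = ∑' i : ℕ, x • (hterm (A + 1) (B + 1) (C + 1) x i * B * C⁻¹) :=
          tsum_congr fun i => hyp_key_term A B C hBC hC x i
      _ = x • ∑' i : ℕ, (hterm (A + 1) (B + 1) (C + 1) x i * B * C⁻¹) :=
          Summable.tsum_const_smul x S4
      _ = x • ((∑' i : ℕ, hterm (A + 1) (B + 1) (C + 1) x i) * B * C⁻¹) := by
          rw [(S3.mul_right B).tsum_mul_right, S3.tsum_mul_right]
  rw [← sub_eq_iff_eq_add']
  exact hEq

end Norm

section Ind
variable {r : ℕ}
local notation "MM" => Matrix (Fin r) (Fin r) ℂ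

lemma hyp_binom_step {M : Type*} [AddCommMonoid M] [Module ℂ M] (s : ℕ) (T : ℕ → M) :
    ∑ k ∈ Finset.range (s + 2), (((s + 1).choose k : ℂ)) • T k
      = ∑ k ∈ Finset.range (s + 1), ((s.choose k : ℂ)) • T k
        + ∑ k ∈ Finset.range (s + 1), ((s.choose k : ℂ)) • T (k + 1) := by
  have e1 := Finset.sum_range_succ' (fun k => (((s + 1).choose k : ℂ)) • T k) (s + 1)
  have e2 := Finset.sum_range_succ' (fun k => ((s.choose k : ℂ)) • T k) (s + 1)
  have e3 := Finset.sum_range_succ (fun k => ((s.choose k : ℂ)) • T k) (s + 1)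
  have hz : ((s.choose (s + 1) : ℂ)) • T (s + 1) = 0 := by
    rw [Nat.choose_succ_self, Nat.cast_zero, zero_smul]
  have key : ∑ k ∈ Finset.range (s + 1), ((s.choose k : ℂ)) • T k
      = (∑ k ∈ Finset.range (s + 1), ((s.choose (k + 1) : ℂ)) • T (k + 1))
        + ((s.choose 0 : ℂ)) • T 0 := by
    rw [← e2, e3, hz, add_zero]
  have h1 : ∑ k ∈ Finset.range (s + 1), (((s + 1).choose (k + 1) : ℂ)) • T (k + 1)
      = ∑ k ∈ Finset.range (s + 1), (((s.choose k : ℂ)) • T (k + 1)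
          + ((s.choose (k + 1) : ℂ)) • T (k + 1)) := by
    refine Finset.sum_congr rfl fun k _ => ?_
    rw [Nat.choose_succ_succ, Nat.cast_add, add_smul]
  rw [e1, h1, Finset.sum_add_distrib, key]
  simp only [Nat.choose_zero_right, Nat.cast_one]
  abel

lemma hyp_hshift (X : MM) (k : ℕ) :
    X + 1 + (k : ℂ) • 1 = X + ((k + 1 : ℕ) : ℂ) • (1 : MM) := by
  push_cast
  rw [add_smul, one_smul]
  abel

lemma hyp_hBC_shift {B C : MM} (hBC : B * C = C * B) :
    (B + 1) * (C + 1) = (C + 1) * (B + 1) := by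
  simp only [mul_add, add_mul, mul_one, one_mul, hBC]
  abel

open Finset in
lemma hyp_partI (hr : 0 < r) {x : ℂ} (hx : ‖x‖ < 1) :
    ∀ (s : ℕ) (A B C : MM), (∀ n : ℕ, IsUnit (C + (n : ℂ) • 1)) → B * C = C * B →
      hypF21 (A + (s : ℂ) • 1) B C x
        = ∑ k ∈ Finset.range (s + 1), ((s.choose k : ℂ) * x ^ k) •
            (hypF21 (A + (k : ℂ) • 1) (B + (k : ℂ) • 1) (C + (k : ℂ) • 1) x
              * mPoch B k * (mPoch C k)⁻¹) := by
  intro s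
  induction s with
  | zero =>
    intro A B C hC hBC
    simp [mPoch, inv_one]
  | succ s ih =>
    intro A B C hC hBC
    set T : ℕ → MM := fun k => x ^ k •
      (hypF21 (A + (k : ℂ) • 1) (B + (k : ℂ) • 1) (C + (k : ℂ) • 1) x
        * mPoch B k * (mPoch C k)⁻¹) with hT
    have hcast : A + ((s + 1 : ℕ) : ℂ) • 1 = A + (s : ℂ) • 1 + (1 : MM) := by
      push_cast
      rw [add_smul, one_smul, add_assoc]
    have hA1 : A + (s : ℂ) • 1 + 1 = A + 1 + (s : ℂ) • (1 : MM) := by abel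
    rw [hcast, hyp_contiguous hr _ B C hC hBC hx, ih A B C hC hBC, hA1,
      ih (A + 1) (B + 1) (C + 1) (fun n => hC_shift hC n) (hyp_hBC_shift hBC)]
    have hL : ∑ k ∈ Finset.range (s + 1 + 1), (((s + 1).choose k : ℂ) * x ^ k) •
          (hypF21 (A + (k : ℂ) • 1) (B + (k : ℂ) • 1) (C + (k : ℂ) • 1) x
            * mPoch B k * (mPoch C k)⁻¹)
        = ∑ k ∈ Finset.range (s + 2), (((s + 1).choose k : ℂ)) • T k :=
      Finset.sum_congr rfl fun k _ => by rw [hT, mul_smul]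
    have hR1 : ∑ k ∈ Finset.range (s + 1), ((s.choose k : ℂ) * x ^ k) •
          (hypF21 (A + (k : ℂ) • 1) (B + (k : ℂ) • 1) (C + (k : ℂ) • 1) x
            * mPoch B k * (mPoch C k)⁻¹)
        = ∑ k ∈ Finset.range (s + 1), ((s.choose k : ℂ)) • T k :=
      Finset.sum_congr rfl fun k _ => by rw [hT, mul_smul]
    have hR2 : x • ((∑ k ∈ Finset.range (s + 1), ((s.choose k : ℂ) * x ^ k) •
          (hypF21 (A + 1 + (k : ℂ) • 1) (B + 1 + (k : ℂ) • 1) (C + 1 + (k : ℂ) • 1) x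
            * mPoch (B + 1) k * (mPoch (C + 1) k)⁻¹)) * B * C⁻¹)
        = ∑ k ∈ Finset.range (s + 1), ((s.choose k : ℂ)) • T (k + 1) := by
      rw [Finset.sum_mul, Finset.sum_mul, Finset.smul_sum]
      refine Finset.sum_congr rfl fun k _ => ?_
      rw [smul_mul_assoc, smul_mul_assoc, smul_smul]
      have hmat : hypF21 (A + 1 + (k : ℂ) • 1) (B + 1 + (k : ℂ) • 1) (C + 1 + (k : ℂ) • 1) x
            * mPoch (B + 1) k * (mPoch (C + 1) k)⁻¹ * B * C⁻¹
          = hypF21 (A + ((k + 1 : ℕ) : ℂ) • 1) (B + ((k + 1 : ℕ) : ℂ) • 1)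
              (C + ((k + 1 : ℕ) : ℂ) • 1) x * mPoch B (k + 1) * (mPoch C (k + 1))⁻¹ := by
        rw [hyp_hshift A k, hyp_hshift B k, hyp_hshift C k,
          mul_assoc (hypF21 _ _ _ x) (mPoch B (k + 1)), poch_ratio hBC hC k]
        simp only [mul_assoc]
      rw [hmat, show x * ((s.choose k : ℂ) * x ^ k) = (s.choose k : ℂ) * x ^ (k + 1) by ring,
        mul_smul]
    rw [hL, hR1, hR2]
    exact (hyp_binom_step s T).symm

open Finset in
lemma hyp_partII (hr : 0 < r) {x : ℂ} (hx : ‖x‖ < 1) :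
    ∀ (s : ℕ) (A B C : MM), (∀ n : ℕ, IsUnit (C + (n : ℂ) • 1)) → B * C = C * B →
      hypF21 (A - (s : ℂ) • 1) B C x
        = ∑ k ∈ Finset.range (s + 1), ((s.choose k : ℂ) * (-x) ^ k) •
            (hypF21 A (B + (k : ℂ) • 1) (C + (k : ℂ) • 1) x * mPoch B k * (mPoch C k)⁻¹) := by
  intro s
  induction s with
  | zero =>
    intro A B C hC hBC
    simp [mPoch, inv_one]
  | succ s ih =>
    intro A B C hC hBC
    set T : ℕ → MM := fun k => (-x) ^ k •
      (hypF21 A (B + (k : ℂ) • 1) (C + (k : ℂ) • 1) x * mPoch B k * (mPoch C k)⁻¹) with hT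
    have hcast : A - ((s + 1 : ℕ) : ℂ) • 1 = A - (s : ℂ) • 1 - (1 : MM) := by
      push_cast
      rw [add_smul, one_smul]
      abel
    have hcont := hyp_contiguous hr (A - (s : ℂ) • 1 - 1) B C hC hBC hx
    rw [sub_add_cancel] at hcont
    have hEq : hypF21 (A - (s : ℂ) • 1 - 1) B C x
        = hypF21 (A - (s : ℂ) • 1) B C x
          - x • (hypF21 (A - (s : ℂ) • 1) (B + 1) (C + 1) x * B * C⁻¹) :=
      eq_sub_of_add_eq hcont.symm
    rw [hcast, hEq, ih A B C hC hBC,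
      ih A (B + 1) (C + 1) (fun n => hC_shift hC n) (hyp_hBC_shift hBC)]
    have hL : ∑ k ∈ Finset.range (s + 1 + 1), (((s + 1).choose k : ℂ) * (-x) ^ k) •
          (hypF21 A (B + (k : ℂ) • 1) (C + (k : ℂ) • 1) x * mPoch B k * (mPoch C k)⁻¹)
        = ∑ k ∈ Finset.range (s + 2), (((s + 1).choose k : ℂ)) • T k :=
      Finset.sum_congr rfl fun k _ => by rw [hT, mul_smul]
    have hR1 : ∑ k ∈ Finset.range (s + 1), ((s.choose k : ℂ) * (-x) ^ k) •
          (hypF21 A (B + (k : ℂ) • 1) (C + (k : ℂ) • 1) x * mPoch B k * (mPoch C k)⁻¹)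
        = ∑ k ∈ Finset.range (s + 1), ((s.choose k : ℂ)) • T k :=
      Finset.sum_congr rfl fun k _ => by rw [hT, mul_smul]
    have hR2 : x • ((∑ k ∈ Finset.range (s + 1), ((s.choose k : ℂ) * (-x) ^ k) •
          (hypF21 A (B + 1 + (k : ℂ) • 1) (C + 1 + (k : ℂ) • 1) x
            * mPoch (B + 1) k * (mPoch (C + 1) k)⁻¹)) * B * C⁻¹)
        = - ∑ k ∈ Finset.range (s + 1), ((s.choose k : ℂ)) • T (k + 1) := by
      rw [Finset.sum_mul, Finset.sum_mul, Finset.smul_sum, ← Finset.sum_neg_distrib]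
      refine Finset.sum_congr rfl fun k _ => ?_
      rw [smul_mul_assoc, smul_mul_assoc, smul_smul]
      have hmat : hypF21 A (B + 1 + (k : ℂ) • 1) (C + 1 + (k : ℂ) • 1) x
            * mPoch (B + 1) k * (mPoch (C + 1) k)⁻¹ * B * C⁻¹
          = hypF21 A (B + ((k + 1 : ℕ) : ℂ) • 1) (C + ((k + 1 : ℕ) : ℂ) • 1) x
              * mPoch B (k + 1) * (mPoch C (k + 1))⁻¹ := by
        rw [hyp_hshift B k, hyp_hshift C k,
          mul_assoc (hypF21 _ _ _ x) (mPoch B (k + 1)), poch_ratio hBC hC k]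
        simp only [mul_assoc]
      rw [hmat, show x * ((s.choose k : ℂ) * (-x) ^ k)
          = -((s.choose k : ℂ) * (-x) ^ (k + 1)) by ring, neg_smul, mul_smul]
    rw [hL, hR1, hR2, sub_neg_eq_add]
    exact (hyp_binom_step s T).symm

end Ind

theorem hypF21_recursion_A_binom {r : ℕ} (A B C : Matrix (Fin r) (Fin r) ℂ) (x : ℂ)
    (hC : ∀ n : ℕ, IsUnit (C + (n : ℂ) • (1 : Matrix (Fin r) (Fin r) ℂ)))
    (hBC : B * C = C * B) (hx : ‖x‖ < 1) :
    ((∀ k : ℕ, IsUnit (A + (k : ℂ) • (1 : Matrix (Fin r) (Fin r) ℂ))) →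
      ∀ s : ℕ,
        hypF21 (A + (s : ℂ) • 1) B C x =
          ∑ k ∈ Finset.range (s + 1),
            ((s.choose k : ℂ) * x ^ k) •
              (hypF21 (A + (k : ℂ) • 1) (B + (k : ℂ) • 1) (C + (k : ℂ) • 1) x *
                mPoch B k * (mPoch C k)⁻¹)) ∧
    ((∀ k : ℕ, IsUnit (A + (k : ℂ) • (1 : Matrix (Fin r) (Fin r) ℂ))) →
      ∀ s : ℕ,
        (∀ k : ℕ, 1 ≤ k → k ≤ s → IsUnit (A - (k : ℂ) • (1 : Matrix (Fin r) (Fin r) ℂ))) →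
        hypF21 (A - (s : ℂ) • 1) B C x =
          ∑ k ∈ Finset.range (s + 1),
            ((s.choose k : ℂ) * (-x) ^ k) •
              (hypF21 A (B + (k : ℂ) • 1) (C + (k : ℂ) • 1) x *
                mPoch B k * (mPoch C k)⁻¹)) := by
  rcases Nat.eq_zero_or_pos r with hr | hr
  · subst hr
    haveI : Subsingleton (Matrix (Fin 0) (Fin 0) ℂ) :=
      ⟨fun a b => by ext i j; exact i.elim0⟩
    exact ⟨fun _ s => Subsingleton.elim _ _, fun _ s _ => Subsingleton.elim _ _⟩
  · exact ⟨fun _ s => hyp_partI hr hx s A B C hC hBC,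
      fun _ s _ => hyp_partII hr hx s A B C hC hBC⟩
end

section
/- Let A, B, B', C ∈ ℂ^{r×r} with C + nI invertible for all integers n ≥ 0, AB = BA, B'C = CB', and |x| < 1, |y| < 1. (i) If A + kI is invertible for all integers k ≥ 0, then for every non-negative integer s: F₁(A+sI, B, B'; C; x, y) = F₁(A, B, B'; C; x, y) + x·B·[∑_{k=1}^{s} F₁(A+kI, B+I, B'; C+I; x, y)]·C⁻¹ + y·[∑_{k=1}^{s} F₁(A+kI, B, B'+I; C+I; x, y)]·B'·C⁻¹. (ii) If moreover A − kI is invertible for all integers 1 ≤ k ≤ s, then F₁(A−sI, B, B'; C; x, y) = F₁(A, B, B'; C; x, y) − x·B·[∑_{k=0}^{s−1} F₁(A−kI, B+I, B'; C+I; x, y)]·C⁻¹ − y·[∑_{k=0}^{s−1} F₁(A−kI, B, B'+I; C+I; x, y)]·B'·C⁻¹. -/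
/-- The first Appell matrix function `F₁(A, B, B'; C; x, y)`. -/
noncomputable def appellF1 {r : ℕ} (A B B' C : Matrix (Fin r) (Fin r) ℂ) (x y : ℂ) :
    Matrix (Fin r) (Fin r) ℂ :=
  ∑' p : ℕ × ℕ,
    (((p.1.factorial : ℂ) * (p.2.factorial : ℂ))⁻¹ * x ^ p.1 * y ^ p.2) •
      (mPoch A (p.1 + p.2) * mPoch B p.1 * mPoch B' p.2 * (mPoch C (p.1 + p.2))⁻¹)




namespace AppellAux

variable {r : ℕ}

local notation "M" => Matrix (Fin r) (Fin r) ℂ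

lemma commute_mPoch {X A : M} (h : Commute X A) (n : ℕ) : Commute X (mPoch A n) := by
  induction n with
  | zero => exact Commute.one_right X
  | succ n ih => exact ih.mul_right (h.add_right ((Commute.one_right X).smul_right _))

lemma smul_one_cast (n : ℕ) : (((n+1 : ℕ) : ℂ) • (1 : M)) = (n : ℂ) • 1 + 1 := by
  push_cast
  rw [add_smul, one_smul]

lemma mPoch_succ_left (A : M) (n : ℕ) : mPoch A (n+1) = A * mPoch (A + 1) n := by
  induction n with
  | zero => simp [mPoch]
  | succ n ih =>
    show mPoch A (n+1) * (A + ((n+1:ℕ) : ℂ) • 1) = A * (mPoch (A+1) n * (A + 1 + (n : ℂ) • 1))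
    rw [ih, mul_assoc, smul_one_cast]
    congr 2
    rw [← add_assoc, add_right_comm]

lemma mPoch_shift_sub (A : M) (n : ℕ) :
    mPoch (A + 1) (n+1) - mPoch A (n+1) = ((n+1 : ℕ) : ℂ) • mPoch (A + 1) n := by
  have h1 : mPoch A (n+1) = mPoch (A + 1) n * A := by
    rw [mPoch_succ_left]
    exact ((commute_mPoch (Commute.add_right (Commute.refl A) (Commute.one_right A)) n)).eq
  show mPoch (A+1) n * (A + 1 + (n : ℂ) • 1) - mPoch A (n+1) = _
  rw [h1, ← mul_sub]
  have : A + 1 + (n : ℂ) • 1 - A = ((n+1:ℕ) : ℂ) • (1 : M) := by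
    rw [smul_one_cast, add_assoc, add_sub_cancel_left, add_comm]
  rw [this, mul_smul_comm, mul_one]

lemma isUnit_mPoch {A : M} (h : ∀ k : ℕ, IsUnit (A + (k : ℂ) • 1)) (n : ℕ) :
    IsUnit (mPoch A n) := by
  induction n with
  | zero => exact isUnit_one
  | succ n ih => exact ih.mul (h n)

lemma shift_isUnit {C : M} (hC : ∀ k : ℕ, IsUnit (C + (k : ℂ) • 1)) (k : ℕ) :
    IsUnit (C + 1 + (k : ℂ) • 1) := by
  have := hC (k+1)
  have e : C + 1 + (k:ℂ) • 1 = C + ((k+1:ℕ):ℂ) • (1:M) := by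
    rw [smul_one_cast, ← add_assoc, add_right_comm]
  rw [e]; exact hC (k+1)

lemma mPoch_inv_factor (C : M) (n : ℕ) :
    (mPoch C (n+1))⁻¹ = (mPoch (C + 1) n)⁻¹ * C⁻¹ := by
  rw [mPoch_succ_left, Matrix.mul_inv_rev]

lemma commute_inv {X N : M} (h : Commute X N) (hN : IsUnit N) : Commute X N⁻¹ := by
  have hd : IsUnit N.det := (Matrix.isUnit_iff_isUnit_det N).mp hN
  show X * N⁻¹ = N⁻¹ * X
  calc X * N⁻¹ = N⁻¹ * (N * X) * N⁻¹ := by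
        rw [← mul_assoc, Matrix.nonsing_inv_mul _ hd, one_mul]
  _ = N⁻¹ * (X * N) * N⁻¹ := by rw [← h.eq]
  _ = N⁻¹ * X := by
        rw [← mul_assoc N⁻¹ X N, mul_assoc _ N N⁻¹, Matrix.mul_nonsing_inv _ hd, mul_one]

end AppellAux

section TermLevel

variable {r : ℕ}
local notation "M" => Matrix (Fin r) (Fin r) ℂ

/-- The general summand of the Appell F₁ series. -/
noncomputable def term (A B B' C : M) (x y : ℂ) : ℕ × ℕ → M
  | (m, n) =>
    (((m.factorial : ℂ) * (n.factorial : ℂ))⁻¹ * x ^ m * y ^ n) •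
      (mPoch A (m + n) * mPoch B m * mPoch B' n * (mPoch C (m + n))⁻¹)

noncomputable def d1 (A B B' C : M) (x y : ℂ) : ℕ × ℕ → M
  | (0, _) => 0
  | (m+1, n) => x • (B * term (A+1) (B+1) B' (C+1) x y (m, n) * C⁻¹)

noncomputable def d2 (A B B' C : M) (x y : ℂ) : ℕ × ℕ → M
  | (_, 0) => 0
  | (m, n+1) => y • (term (A+1) B (B'+1) (C+1) x y (m, n) * B' * C⁻¹)

lemma scalar1 (m n : ℕ) (x y : ℂ) :
    x * ((((m.factorial : ℂ)) * (n.factorial : ℂ))⁻¹ * x ^ m * y ^ n) =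
      ((m+1 : ℕ) : ℂ) * (((((m+1 : ℕ).factorial : ℂ)) * (n.factorial : ℂ))⁻¹ * x ^ (m+1) * y ^ n) := by
  have h1 : ((m+1 : ℕ).factorial : ℂ) = ((m+1 : ℕ) : ℂ) * (m.factorial : ℂ) := by
    rw [Nat.factorial_succ]; push_cast; ring
  have h2 : ((m+1 : ℕ) : ℂ) ≠ 0 := by exact_mod_cast Nat.succ_ne_zero m
  have h3 : ((m.factorial : ℂ)) ≠ 0 := Nat.cast_ne_zero.2 m.factorial_ne_zero
  have h4 : ((n.factorial : ℂ)) ≠ 0 := Nat.cast_ne_zero.2 n.factorial_ne_zero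
  have key : ((m+1:ℕ) : ℂ) * (((m+1 : ℕ).factorial : ℂ) * (n.factorial : ℂ))⁻¹ =
      ((m.factorial : ℂ) * (n.factorial : ℂ))⁻¹ := by
    rw [h1, mul_assoc, mul_inv, ← mul_assoc, mul_inv_cancel₀ h2, one_mul]
  linear_combination (-(x ^ (m+1)) * y ^ n) * key

lemma key1 {A B B' C : M} {x y : ℂ} (hAB : A * B = B * A) (m n : ℕ) :
    d1 A B B' C x y (m+1, n) =
      ((((m+1 : ℕ).factorial : ℂ) * (n.factorial : ℂ))⁻¹ * x ^ (m+1) * y ^ n) •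
        (((m+1 : ℕ) : ℂ) •
          (mPoch (A+1) (m+n) * mPoch B (m+1) * mPoch B' n * (mPoch C (m+n+1))⁻¹)) := by
  have hBA : Commute B A := hAB.symm
  have hcomm : Commute B (mPoch (A+1) (m+n)) :=
    AppellAux.commute_mPoch (hBA.add_right (Commute.one_right B)) _
  show x • (B * term (A+1) (B+1) B' (C+1) x y (m, n) * C⁻¹) = _
  rw [term]
  simp only [smul_mul_assoc, mul_smul_comm, smul_smul]
  congr 1
  · rw [scalar1 m n x y]; ring
  have hB : B * mPoch (B+1) m = mPoch B (m+1) := (AppellAux.mPoch_succ_left B m).symm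
  calc B * (mPoch (A+1) (m+n) * mPoch (B+1) m * mPoch B' n * (mPoch (C+1) (m+n))⁻¹) * C⁻¹
      = (B * mPoch (A+1) (m+n)) * mPoch (B+1) m * mPoch B' n * ((mPoch (C+1) (m+n))⁻¹ * C⁻¹) := by
        noncomm_ring
    _ = mPoch (A+1) (m+n) * (B * mPoch (B+1) m) * mPoch B' n * ((mPoch (C+1) (m+n))⁻¹ * C⁻¹) := by
        rw [hcomm.eq]; noncomm_ring
    _ = _ := by rw [hB, AppellAux.mPoch_inv_factor]

lemma scalar2 (m n : ℕ) (x y : ℂ) :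
    y * ((((m.factorial : ℂ)) * (n.factorial : ℂ))⁻¹ * x ^ m * y ^ n) =
      ((n+1 : ℕ) : ℂ) * ((((m.factorial : ℂ)) * ((n+1 : ℕ).factorial : ℂ))⁻¹ * x ^ m * y ^ (n+1)) := by
  have h1 : ((n+1 : ℕ).factorial : ℂ) = ((n+1 : ℕ) : ℂ) * (n.factorial : ℂ) := by
    rw [Nat.factorial_succ]; push_cast; ring
  have h2 : ((n+1 : ℕ) : ℂ) ≠ 0 := by exact_mod_cast Nat.succ_ne_zero n
  have h3 : ((m.factorial : ℂ)) ≠ 0 := Nat.cast_ne_zero.2 m.factorial_ne_zero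
  have h4 : ((n.factorial : ℂ)) ≠ 0 := Nat.cast_ne_zero.2 n.factorial_ne_zero
  have key : ((n+1:ℕ) : ℂ) * ((m.factorial : ℂ) * ((n+1 : ℕ).factorial : ℂ))⁻¹ =
      ((m.factorial : ℂ) * (n.factorial : ℂ))⁻¹ := by
    have h2' : ((n : ℂ) + 1) ≠ 0 := by exact_mod_cast h2
    rw [h1]
    push_cast
    field_simp
  linear_combination (-(x ^ m) * y ^ (n+1)) * key

lemma key2 {A B B' C : M} {x y : ℂ}
    (hC : ∀ k : ℕ, IsUnit (C + (k : ℂ) • (1 : M))) (hB'C : B' * C = C * B') (m n : ℕ) :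
    d2 A B B' C x y (m, n+1) =
      (((m.factorial : ℂ) * ((n+1 : ℕ).factorial : ℂ))⁻¹ * x ^ m * y ^ (n+1)) •
        (((n+1 : ℕ) : ℂ) •
          (mPoch (A+1) (m+n) * mPoch B m * mPoch B' (n+1) * (mPoch C (m+n+1))⁻¹)) := by
  have hCu : IsUnit (mPoch (C+1) (m+n)) :=
    AppellAux.isUnit_mPoch (AppellAux.shift_isUnit hC) _
  have hB'Cc : Commute B' C := hB'C
  have hcomm : Commute B' (mPoch (C+1) (m+n)) :=
    AppellAux.commute_mPoch (hB'Cc.add_right (Commute.one_right B')) _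
  have hcominv : Commute B' ((mPoch (C+1) (m+n))⁻¹) := AppellAux.commute_inv hcomm hCu
  have hB' : mPoch (B'+1) n * B' = mPoch B' (n+1) := by
    rw [AppellAux.mPoch_succ_left B' n,
      (AppellAux.commute_mPoch ((Commute.refl B').add_right (Commute.one_right B')) n).eq]
  show y • (term (A+1) B (B'+1) (C+1) x y (m, n) * B' * C⁻¹) = _
  rw [term]
  simp only [smul_mul_assoc, mul_smul_comm, smul_smul]
  congr 1
  · rw [scalar2 m n x y]; ring
  calc mPoch (A+1) (m+n) * mPoch B m * mPoch (B'+1) n * (mPoch (C+1) (m+n))⁻¹ * B' * C⁻¹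
      = mPoch (A+1) (m+n) * mPoch B m * mPoch (B'+1) n * ((mPoch (C+1) (m+n))⁻¹ * B') * C⁻¹ := by
        noncomm_ring
    _ = mPoch (A+1) (m+n) * mPoch B m * (mPoch (B'+1) n * B') * ((mPoch (C+1) (m+n))⁻¹ * C⁻¹) := by
        rw [← hcominv.eq]; noncomm_ring
    _ = _ := by rw [hB', AppellAux.mPoch_inv_factor]

end TermLevel

section StepLemma
variable {r : ℕ}
local notation "M" => Matrix (Fin r) (Fin r) ℂ

lemma expand {c s : ℂ} {PA1 PA X Q1 Q2 Q3 : M} (hs : PA1 = PA + s • X) :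
    c • (PA1 * Q1 * Q2 * Q3) = c • (PA * Q1 * Q2 * Q3) + c • (s • (X * Q1 * Q2 * Q3)) := by
  rw [hs]
  simp [add_mul, smul_mul_assoc, smul_add]

lemma term_step {A B B' C : M} {x y : ℂ}
    (hC : ∀ k : ℕ, IsUnit (C + (k : ℂ) • (1 : M)))
    (hAB : A * B = B * A) (hB'C : B' * C = C * B') (p : ℕ × ℕ) :
    term (A+1) B B' C x y p =
      term A B B' C x y p + d1 A B B' C x y p + d2 A B B' C x y p := by
  obtain ⟨m, n⟩ := p
  match m, n with
  | 0, 0 => simp [term, d1, d2, mPoch]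
  | m+1, 0 =>
    have d2z : d2 A B B' C x y (m+1, 0) = 0 := rfl
    rw [key1 hAB m 0, d2z, add_zero]
    simp only [term, Nat.add_zero]
    have hs : mPoch (A+1) (m+1) = mPoch A (m+1) + ((m+1 : ℕ) : ℂ) • mPoch (A+1) m :=
      sub_eq_iff_eq_add'.mp (AppellAux.mPoch_shift_sub A m)
    rw [expand hs]
  | 0, n+1 =>
    have d1z : d1 A B B' C x y (0, n+1) = 0 := rfl
    rw [key2 hC hB'C 0 n, d1z, add_zero]
    simp only [term, Nat.zero_add]
    have hs : mPoch (A+1) (n+1) = mPoch A (n+1) + ((n+1 : ℕ) : ℂ) • mPoch (A+1) n :=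
      sub_eq_iff_eq_add'.mp (AppellAux.mPoch_shift_sub A n)
    rw [expand hs]
  | m+1, n+1 =>
    rw [key1 hAB m (n+1), key2 hC hB'C (m+1) n]
    simp only [term]
    have e1 : m + (n+1) = m + n + 1 := by omega
    have e2 : m + 1 + n = m + n + 1 := by omega
    have e3 : m + 1 + (n + 1) = m + n + 1 + 1 := by omega
    rw [e1, e2, e3]
    have hs : mPoch (A+1) (m+n+1+1) =
        mPoch A (m+n+1+1) + ((m+n+1+1 : ℕ) : ℂ) • mPoch (A+1) (m+n+1) :=
      sub_eq_iff_eq_add'.mp (AppellAux.mPoch_shift_sub A (m+n+1))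
    rw [expand hs]
    push_cast
    module

end StepLemma

section Summability

open Filter

attribute [local instance] Matrix.linftyOpNormedAddCommGroup Matrix.linftyOpNormedRing
  Matrix.linftyOpNormedAlgebra Matrix.linftyOpNormedSpace

variable {r : ℕ}
local notation "M" => Matrix (Fin r) (Fin r) ℂ

lemma ev_ge (a b : ℝ) (ha : 0 < a) : ∀ᶠ k : ℕ in atTop, b ≤ a * k := by
  obtain ⟨n₀, hn₀⟩ := exists_nat_ge (b / a)
  filter_upwards [eventually_ge_atTop n₀] with k hk
  have h1 : b / a ≤ (k : ℝ) := le_trans hn₀ (Nat.cast_le.2 hk)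
  have := (div_le_iff₀ ha).mp h1
  linarith

lemma exists_geom_bound (g : ℕ → ℝ) (σ : ℝ) (hσ : 0 < σ)
    (hev : ∀ᶠ k in atTop, g (k+1) ≤ σ * g k) :
    ∃ K : ℝ, 0 ≤ K ∧ ∀ k, g k ≤ K * σ ^ k := by
  obtain ⟨N, hN⟩ := eventually_atTop.mp hev
  have hne : (Finset.range (N+1)).Nonempty := ⟨0, by simp⟩
  set K : ℝ := max 0 ((Finset.range (N+1)).sup' hne fun k => g k / σ ^ k) with hK
  refine ⟨K, le_max_left _ _, ?_⟩
  have base : ∀ k, k ≤ N → g k ≤ K * σ ^ k := by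
    intro k hk
    have h1 : g k / σ ^ k ≤ K :=
      le_max_of_le_right
        (Finset.le_sup' (fun k => g k / σ ^ k) (Finset.mem_range.2 (Nat.lt_succ_of_le hk)))
    have hp : (0:ℝ) < σ ^ k := pow_pos hσ k
    calc g k = g k / σ ^ k * σ ^ k := by field_simp
      _ ≤ K * σ ^ k := mul_le_mul_of_nonneg_right h1 hp.le
  have upper : ∀ k, N ≤ k → g k ≤ K * σ ^ k := by
    intro k hk
    induction k, hk using Nat.le_induction with
    | base => exact base N le_rfl
    | succ k hk ih =>
        calc g (k+1) ≤ σ * g k := hN k hk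
          _ ≤ σ * (K * σ ^ k) := mul_le_mul_of_nonneg_left ih hσ.le
          _ = K * σ ^ (k+1) := by ring
  intro k
  rcases le_or_gt k N with h | h
  · exact base k h
  · exact upper k h.le

lemma norm_mPoch_le [NeZero r] (A : M) (n : ℕ) :
    ‖mPoch A n‖ ≤ ∏ j ∈ Finset.range n, (‖A‖ + j + 1) := by
  induction n with
  | zero => simp [mPoch]
  | succ n ih =>
    rw [Finset.prod_range_succ]
    have h1 : ‖A + (n : ℂ) • (1 : M)‖ ≤ ‖A‖ + n + 1 := by
      calc ‖A + (n : ℂ) • (1 : M)‖ ≤ ‖A‖ + ‖(n : ℂ) • (1 : M)‖ := norm_add_le _ _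
        _ = ‖A‖ + n := by rw [norm_smul, norm_one, mul_one, Complex.norm_natCast]
        _ ≤ ‖A‖ + n + 1 := by linarith
    calc ‖mPoch A (n+1)‖ ≤ ‖mPoch A n‖ * ‖A + (n : ℂ) • (1 : M)‖ := norm_mul_le _ _
      _ ≤ (∏ j ∈ Finset.range n, (‖A‖ + j + 1)) * (‖A‖ + n + 1) := by
          apply mul_le_mul ih h1 (norm_nonneg _)
          exact Finset.prod_nonneg fun j _ => by positivity

lemma norm_mPochInv_le [NeZero r] (C : M) (n : ℕ) :
    ‖(mPoch C n)⁻¹‖ ≤ ∏ j ∈ Finset.range n, ‖(C + (j : ℂ) • (1 : M))⁻¹‖ := by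
  induction n with
  | zero =>
    have h : (mPoch C 0)⁻¹ = (1 : M) := Matrix.inv_eq_left_inv (by simp [mPoch])
    rw [h]
    simp
  | succ n ih =>
    have hstep : (mPoch C (n+1))⁻¹ = (C + (n : ℂ) • 1)⁻¹ * (mPoch C n)⁻¹ := by
      show (mPoch C n * (C + (n : ℂ) • 1))⁻¹ = _
      rw [Matrix.mul_inv_rev]
    rw [hstep, Finset.prod_range_succ, mul_comm (∏ j ∈ Finset.range n, _)]
    calc ‖(C + (n : ℂ) • (1:M))⁻¹ * (mPoch C n)⁻¹‖
        ≤ ‖(C + (n : ℂ) • (1:M))⁻¹‖ * ‖(mPoch C n)⁻¹‖ := norm_mul_le _ _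
      _ ≤ ‖(C + (n : ℂ) • (1:M))⁻¹‖ * ∏ j ∈ Finset.range n, ‖(C + (j : ℂ) • (1:M))⁻¹‖ :=
          mul_le_mul_of_nonneg_left ih (norm_nonneg _)

lemma q_decay [NeZero r] (C : M) (k : ℕ) (hk : 2 * ‖C‖ + 1 ≤ (k : ℝ)) :
    ‖(C + (k : ℂ) • (1 : M))⁻¹‖ ≤ ((k : ℝ) - ‖C‖)⁻¹ := by
  have hC0 : (0:ℝ) ≤ ‖C‖ := norm_nonneg C
  have hkpos : (0:ℝ) < k := by linarith
  have hkne' : (k : ℕ) ≠ 0 := by exact_mod_cast hkpos.ne'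
  have hkne : ((k : ℕ) : ℂ) ≠ 0 := Nat.cast_ne_zero.2 hkne'
  set t : M := -(((k : ℂ))⁻¹ • C) with ht
  have hnt : ‖t‖ = ‖C‖ / k := by
    rw [ht, norm_neg, norm_smul, norm_inv, Complex.norm_natCast]
    rw [div_eq_inv_mul]
  have hkC : (0:ℝ) < (k : ℝ) - ‖C‖ := by linarith
  have h1 : ‖t‖ < 1 := by
    rw [hnt]
    rw [div_lt_one hkpos]
    linarith
  set u : Mˣ := Units.oneSub t h1 with hu
  have huval : (u : M) = 1 + (k : ℂ)⁻¹ • C := by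
    rw [hu, Units.val_oneSub, ht, sub_neg_eq_add]
  have hfac : C + (k : ℂ) • (1 : M) = (k : ℂ) • (u : M) := by
    rw [huval, smul_add, smul_smul, mul_inv_cancel₀ hkne, one_smul, add_comm]
  have hinv : (C + (k : ℂ) • (1 : M))⁻¹ = (k : ℂ)⁻¹ • ((u⁻¹ : Mˣ) : M) := by
    apply Matrix.inv_eq_right_inv
    rw [hfac, smul_mul_smul_comm, mul_inv_cancel₀ hkne, Units.mul_inv, one_smul]
  have hb : ‖((u⁻¹ : Mˣ) : M)‖ ≤ (1 - ‖t‖)⁻¹ := by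
    have hgeo : ((u⁻¹ : Mˣ) : M) = ∑' n : ℕ, t ^ n := rfl
    have := tsum_geometric_le_of_norm_lt_one t h1
    rw [norm_one] at this
    rw [hgeo]
    exact le_of_le_of_eq this (by rw [sub_self, zero_add])
  rw [hinv, norm_smul, norm_inv, Complex.norm_natCast]
  have hts : (1 - ‖t‖)⁻¹ = (k : ℝ) / ((k:ℝ) - ‖C‖) := by
    rw [hnt, one_sub_div hkpos.ne', inv_div]
  calc ((k:ℝ))⁻¹ * ‖((u⁻¹ : Mˣ) : M)‖ ≤ ((k:ℝ))⁻¹ * (1 - ‖t‖)⁻¹ := by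
        apply mul_le_mul_of_nonneg_left hb
        positivity
    _ = ((k : ℝ) - ‖C‖)⁻¹ := by
        rw [hts]
        field_simp
end Summability

section Master
set_option maxHeartbeats 1000000

open Filter

attribute [local instance] Matrix.linftyOpNormedAddCommGroup Matrix.linftyOpNormedRing
  Matrix.linftyOpNormedAlgebra Matrix.linftyOpNormedSpace

variable {r : ℕ}
local notation "M" => Matrix (Fin r) (Fin r) ℂ

lemma summable_term (A B B' C : M) (x y : ℂ)
    (hx : ‖x‖ < 1) (hy : ‖y‖ < 1) :
    Summable (term A B B' C x y) := by
  rcases Nat.eq_zero_or_pos r with h0 | hpos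
  · subst h0
    have hz : term A B B' C x y = fun _ => 0 := funext fun p => Subsingleton.elim _ _
    rw [hz]
    exact summable_zero
  have : NeZero r := ⟨hpos.ne'⟩
  -- constants
  set τ : ℝ := max (max (‖x‖) (‖y‖)) (1/2) with hτ
  have hτ0 : (0:ℝ) < τ := lt_of_lt_of_le (by norm_num) (le_max_right _ _)
  have hτ1 : τ < 1 := by
    apply max_lt (max_lt hx hy) (by norm_num)
  have hxτ : ‖x‖ ≤ τ := le_trans (le_max_left _ _) (le_max_left _ _)
  have hyτ : ‖y‖ ≤ τ := le_trans (le_max_right _ _) (le_max_left _ _)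
  set s : ℝ := Real.sqrt τ with hs
  have hs0 : 0 < s := Real.sqrt_pos.2 hτ0
  have hss : s * s = τ := Real.mul_self_sqrt hτ0.le
  have hs1 : s < 1 := by
    nlinarith [Real.sq_sqrt hτ0.le, Real.sqrt_nonneg τ]
  set σ : ℝ := s⁻¹ with hσ
  have hσ0 : 0 < σ := inv_pos.2 hs0
  have hσ1 : 1 < σ := by
    rw [hσ]
    exact (one_lt_inv₀ hs0).2 hs1
  -- the alpha sequence
  set q : ℕ → ℝ := fun k => ‖(C + (k : ℂ) • (1:M))⁻¹‖ with hq
  set α : ℕ → ℝ := fun k => ∏ j ∈ Finset.range k, ((‖A‖ + j + 1) * q j) with hα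
  have hα0 : ∀ k, 0 ≤ α k := fun k => Finset.prod_nonneg fun j _ => by positivity
  have hαev : ∀ᶠ k in atTop, α (k+1) ≤ σ * α k := by
    filter_upwards [ev_ge (σ - 1) (σ * ‖C‖ + ‖A‖ + 1) (by linarith),
        ev_ge 1 (2 * ‖C‖ + 1) (by norm_num)] with k hk1 hk2
    have hk2' : 2 * ‖C‖ + 1 ≤ (k:ℝ) := by linarith
    have hkC : (0:ℝ) < (k:ℝ) - ‖C‖ := by
      have := norm_nonneg C
      linarith
    have hqk : q k ≤ ((k:ℝ) - ‖C‖)⁻¹ := q_decay C k hk2'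
    have hfac : (‖A‖ + k + 1) * q k ≤ σ := by
      calc (‖A‖ + k + 1) * q k ≤ (‖A‖ + k + 1) * ((k:ℝ) - ‖C‖)⁻¹ := by
            apply mul_le_mul_of_nonneg_left hqk (by positivity)
        _ ≤ σ * (((k:ℝ) - ‖C‖) * ((k:ℝ) - ‖C‖)⁻¹) := by
            rw [← mul_assoc]
            apply mul_le_mul_of_nonneg_right ?_ (by positivity)
            nlinarith
        _ = σ := by rw [mul_inv_cancel₀ hkC.ne', mul_one]
    have : α (k+1) = α k * ((‖A‖ + k + 1) * q k) := Finset.prod_range_succ _ _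
    rw [this, mul_comm (α k)]
    exact mul_le_mul_of_nonneg_right hfac (hα0 k)
  obtain ⟨K, hK0, hKb⟩ := exists_geom_bound α σ hσ0 hαev
  -- 1D sequences
  set u : ℕ → ℝ := fun m =>
    σ ^ m * (∏ j ∈ Finset.range m, (‖B‖ + j + 1)) * ‖x‖ ^ m * ((m.factorial : ℝ))⁻¹
    with hud
  set v : ℕ → ℝ := fun n =>
    σ ^ n * (∏ j ∈ Finset.range n, (‖B'‖ + j + 1)) * ‖y‖ ^ n * ((n.factorial : ℝ))⁻¹
    with hvd
  have hu0 : ∀ m, 0 ≤ u m := fun m => by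
    apply mul_nonneg (mul_nonneg (mul_nonneg (by positivity) ?_) (by positivity)) (by positivity)
    exact Finset.prod_nonneg fun j _ => by positivity
  have hv0 : ∀ n, 0 ≤ v n := fun n => by
    apply mul_nonneg (mul_nonneg (mul_nonneg (by positivity) ?_) (by positivity)) (by positivity)
    exact Finset.prod_nonneg fun j _ => by positivity
  have hρ : (1 + s)/2 < 1 := by linarith
  have hgen : ∀ (D : M) (z : ℂ), ‖z‖ ≤ τ →
      Summable (fun m : ℕ => σ ^ m * (∏ j ∈ Finset.range m, (‖D‖ + j + 1)) *
        ‖z‖ ^ m * ((m.factorial : ℝ))⁻¹) := by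
    intro D z hz
    set w : ℕ → ℝ := fun m => σ ^ m * (∏ j ∈ Finset.range m, (‖D‖ + j + 1)) *
        ‖z‖ ^ m * ((m.factorial : ℝ))⁻¹ with hwd
    have hw0 : ∀ m, 0 ≤ w m := fun m => by
      apply mul_nonneg (mul_nonneg (mul_nonneg (by positivity) ?_) (by positivity)) (by positivity)
      exact Finset.prod_nonneg fun j _ => by positivity
    apply summable_of_ratio_norm_eventually_le (r := (1 + s)/2) hρ
    have hσz : σ * ‖z‖ ≤ s := by
      calc σ * ‖z‖ ≤ σ * τ := mul_le_mul_of_nonneg_left hz hσ0.le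
        _ = s := by
          rw [hσ, ← hss]
          field_simp
    filter_upwards [ev_ge ((1+s)/2 - s) (s * (‖D‖ + 1)) (by linarith)] with m hm
    have hwsucc : w (m+1) = w m * ((σ * ‖z‖) * ((‖D‖ + m + 1) / (m+1))) := by
      rw [hwd]
      simp only
      rw [Finset.prod_range_succ, pow_succ, pow_succ, Nat.factorial_succ]
      push_cast
      have hm1 : ((m:ℝ) + 1) ≠ 0 := by positivity
      have hmf : ((m.factorial : ℝ)) ≠ 0 := Nat.cast_ne_zero.2 m.factorial_ne_zero
      field_simp
    have hfrac : (σ * ‖z‖) * ((‖D‖ + m + 1) / (m+1)) ≤ (1 + s)/2 := by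
      have hD0 : (0:ℝ) ≤ ‖D‖ := norm_nonneg D
      have h1 : (σ * ‖z‖) * ((‖D‖ + m + 1) / (m+1)) ≤ s * ((‖D‖ + m + 1) / (m+1)) := by
        apply mul_le_mul_of_nonneg_right hσz (by positivity)
      have h2 : s * ((‖D‖ + m + 1) / (m+1)) ≤ (1 + s)/2 := by
        rw [← mul_div_assoc, div_le_iff₀ (by positivity : (0:ℝ) < (m:ℝ)+1)]
        nlinarith [hs0.le]
      linarith
    rw [Real.norm_of_nonneg (hw0 (m+1)), Real.norm_of_nonneg (hw0 m), hwsucc, mul_comm ((1+s)/2)]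
    exact mul_le_mul_of_nonneg_left hfrac (hw0 m)
  have hu : Summable u := hgen B x hxτ
  have hv : Summable v := hgen B' y hyτ
  -- the bound
  apply Summable.of_norm_bounded (g := fun p : ℕ × ℕ => (K * u p.1) * v p.2)
  · exact Summable.mul_of_nonneg (hu.mul_left K) hv
      (fun m => mul_nonneg hK0 (hu0 m)) (fun n => hv0 n)
  rintro ⟨m, n⟩
  show ‖term A B B' C x y (m, n)‖ ≤ K * u m * v n
  have hterm : term A B B' C x y (m, n) =
      (((m.factorial : ℂ) * (n.factorial : ℂ))⁻¹ * x ^ m * y ^ n) •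
        (mPoch A (m + n) * mPoch B m * mPoch B' n * (mPoch C (m + n))⁻¹) := rfl
  rw [hterm, norm_smul]
  have hsc : ‖((m.factorial : ℂ) * (n.factorial : ℂ))⁻¹ * x ^ m * y ^ n‖ =
      ((m.factorial : ℝ))⁻¹ * ((n.factorial : ℝ))⁻¹ * ‖x‖ ^ m * ‖y‖ ^ n := by
    rw [norm_mul, norm_mul, norm_inv, norm_mul, norm_pow, norm_pow]
    rw [Complex.norm_natCast, Complex.norm_natCast]
    rw [mul_inv]
  rw [hsc]
  have hPa := norm_mPoch_le A (m+n)
  have hPb := norm_mPoch_le B m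
  have hPb' := norm_mPoch_le B' n
  have hQ := norm_mPochInv_le C (m+n)
  have hmat : ‖mPoch A (m + n) * mPoch B m * mPoch B' n * (mPoch C (m + n))⁻¹‖ ≤
      (∏ j ∈ Finset.range (m+n), (‖A‖ + j + 1)) * (∏ j ∈ Finset.range m, (‖B‖ + j + 1)) *
      (∏ j ∈ Finset.range n, (‖B'‖ + j + 1)) * (∏ j ∈ Finset.range (m+n), q j) := by
    calc ‖mPoch A (m + n) * mPoch B m * mPoch B' n * (mPoch C (m + n))⁻¹‖
        ≤ ‖mPoch A (m + n) * mPoch B m * mPoch B' n‖ * ‖(mPoch C (m + n))⁻¹‖ := norm_mul_le _ _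
      _ ≤ (‖mPoch A (m + n) * mPoch B m‖ * ‖mPoch B' n‖) * ‖(mPoch C (m + n))⁻¹‖ := by
          apply mul_le_mul_of_nonneg_right (norm_mul_le _ _) (norm_nonneg _)
      _ ≤ ((‖mPoch A (m + n)‖ * ‖mPoch B m‖) * ‖mPoch B' n‖) * ‖(mPoch C (m + n))⁻¹‖ := by
          apply mul_le_mul_of_nonneg_right ?_ (norm_nonneg _)
          apply mul_le_mul_of_nonneg_right (norm_mul_le _ _) (norm_nonneg _)
      _ ≤ _ := by
          gcongr
  have halpha : (∏ j ∈ Finset.range (m+n), (‖A‖ + j + 1)) * (∏ j ∈ Finset.range (m+n), q j) =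
      α (m+n) := by
    rw [hα, ← Finset.prod_mul_distrib]
  have hKσ : α (m+n) ≤ K * σ ^ (m+n) := hKb (m+n)
  -- put it all together
  calc ((m.factorial : ℝ))⁻¹ * ((n.factorial : ℝ))⁻¹ * ‖x‖ ^ m * ‖y‖ ^ n *
        ‖mPoch A (m + n) * mPoch B m * mPoch B' n * (mPoch C (m + n))⁻¹‖
      ≤ ((m.factorial : ℝ))⁻¹ * ((n.factorial : ℝ))⁻¹ * ‖x‖ ^ m * ‖y‖ ^ n *
        ((∏ j ∈ Finset.range (m+n), (‖A‖ + j + 1)) * (∏ j ∈ Finset.range m, (‖B‖ + j + 1)) *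
        (∏ j ∈ Finset.range n, (‖B'‖ + j + 1)) * (∏ j ∈ Finset.range (m+n), q j)) := by
        apply mul_le_mul_of_nonneg_left hmat (by positivity)
    _ = α (m+n) * (((∏ j ∈ Finset.range m, (‖B‖ + j + 1)) * ‖x‖ ^ m *
          ((m.factorial : ℝ))⁻¹) * ((∏ j ∈ Finset.range n, (‖B'‖ + j + 1)) *
          ‖y‖ ^ n * ((n.factorial : ℝ))⁻¹)) := by
        rw [← halpha]
        ring
    _ ≤ (K * σ ^ (m+n)) * (((∏ j ∈ Finset.range m, (‖B‖ + j + 1)) * ‖x‖ ^ m *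
          ((m.factorial : ℝ))⁻¹) * ((∏ j ∈ Finset.range n, (‖B'‖ + j + 1)) *
          ‖y‖ ^ n * ((n.factorial : ℝ))⁻¹)) := by
        apply mul_le_mul_of_nonneg_right hKσ
        have h1 : (0:ℝ) ≤ ∏ j ∈ Finset.range m, (‖B‖ + j + 1) :=
          Finset.prod_nonneg fun j _ => by positivity
        have h2 : (0:ℝ) ≤ ∏ j ∈ Finset.range n, (‖B'‖ + j + 1) :=
          Finset.prod_nonneg fun j _ => by positivity
        positivity
    _ = K * u m * v n := by
        rw [hud, hvd]
        simp only
        rw [pow_add]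
        ring

end Master

section Step

variable {r : ℕ}
local notation "M" => Matrix (Fin r) (Fin r) ℂ

lemma step (A B B' C : M) (x y : ℂ)
    (hC : ∀ k : ℕ, IsUnit (C + (k : ℂ) • (1 : M)))
    (hAB : A * B = B * A) (hB'C : B' * C = C * B')
    (hx : ‖x‖ < 1) (hy : ‖y‖ < 1) :
    (∑' p : ℕ × ℕ, term (A+1) B B' C x y p) =
      (∑' p : ℕ × ℕ, term A B B' C x y p)
        + x • (B * (∑' p : ℕ × ℕ, term (A+1) (B+1) B' (C+1) x y p) * C⁻¹)
        + y • ((∑' p : ℕ × ℕ, term (A+1) B (B'+1) (C+1) x y p) * B' * C⁻¹) := by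
  have S0 := summable_term A B B' C x y hx hy
  have SB := summable_term (A+1) (B+1) B' (C+1) x y hx hy
  have SB' := summable_term (A+1) B (B'+1) (C+1) x y hx hy
  -- first shift map
  set e1 : ℕ × ℕ → ℕ × ℕ := fun p => (p.1 + 1, p.2) with he1
  have e1inj : Function.Injective e1 := by
    rintro ⟨a, b⟩ ⟨c, d⟩ h
    simp only [he1, Prod.mk.injEq] at h
    exact Prod.ext (by omega) h.2
  have hcomp1 : d1 A B B' C x y ∘ e1 =
      fun p => x • (B * term (A+1) (B+1) B' (C+1) x y p * C⁻¹) := by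
    funext p
    obtain ⟨m, n⟩ := p
    rfl
  have hvan1 : ∀ p ∉ Set.range e1, d1 A B B' C x y p = 0 := by
    rintro ⟨m, n⟩ hp
    match m with
    | 0 => rfl
    | m+1 => exact absurd ⟨(m, n), rfl⟩ hp
  have Sd1' : Summable (fun p : ℕ × ℕ => x • (B * term (A+1) (B+1) B' (C+1) x y p * C⁻¹)) :=
    ((SB.mul_left B).mul_right C⁻¹).const_smul x
  have Sd1 : Summable (d1 A B B' C x y) :=
    (e1inj.summable_iff hvan1).mp (by rw [hcomp1]; exact Sd1')
  have Td1 : ∑' p : ℕ × ℕ, d1 A B B' C x y p =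
      x • (B * (∑' p : ℕ × ℕ, term (A+1) (B+1) B' (C+1) x y p) * C⁻¹) := by
    have hsupp : Function.support (d1 A B B' C x y) ⊆ Set.range e1 := by
      intro p hp
      by_contra hcon
      exact hp (hvan1 p hcon)
    calc ∑' p : ℕ × ℕ, d1 A B B' C x y p
        = ∑' p : ℕ × ℕ, (d1 A B B' C x y ∘ e1) p := (e1inj.tsum_eq hsupp).symm
      _ = ∑' p : ℕ × ℕ, x • (B * term (A+1) (B+1) B' (C+1) x y p * C⁻¹) := by rw [hcomp1]
      _ = x • ∑' p : ℕ × ℕ, B * term (A+1) (B+1) B' (C+1) x y p * C⁻¹ :=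
          Summable.tsum_const_smul x ((SB.mul_left B).mul_right C⁻¹)
      _ = x • ((∑' p : ℕ × ℕ, B * term (A+1) (B+1) B' (C+1) x y p) * C⁻¹) := by
          rw [(SB.mul_left B).tsum_mul_right C⁻¹]
      _ = x • (B * (∑' p : ℕ × ℕ, term (A+1) (B+1) B' (C+1) x y p) * C⁻¹) := by
          rw [SB.tsum_mul_left B]
  -- second shift map
  set e2 : ℕ × ℕ → ℕ × ℕ := fun p => (p.1, p.2 + 1) with he2
  have e2inj : Function.Injective e2 := by
    rintro ⟨a, b⟩ ⟨c, d⟩ h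
    simp only [he2, Prod.mk.injEq] at h
    exact Prod.ext h.1 (by omega)
  have hcomp2 : d2 A B B' C x y ∘ e2 =
      fun p => y • (term (A+1) B (B'+1) (C+1) x y p * B' * C⁻¹) := by
    funext p
    obtain ⟨m, n⟩ := p
    rfl
  have hvan2 : ∀ p ∉ Set.range e2, d2 A B B' C x y p = 0 := by
    rintro ⟨m, n⟩ hp
    match n with
    | 0 => rfl
    | n+1 => exact absurd ⟨(m, n), rfl⟩ hp
  have Sd2' : Summable (fun p : ℕ × ℕ => y • (term (A+1) B (B'+1) (C+1) x y p * B' * C⁻¹)) :=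
    ((SB'.mul_right B').mul_right C⁻¹).const_smul y
  have Sd2 : Summable (d2 A B B' C x y) :=
    (e2inj.summable_iff hvan2).mp (by rw [hcomp2]; exact Sd2')
  have Td2 : ∑' p : ℕ × ℕ, d2 A B B' C x y p =
      y • ((∑' p : ℕ × ℕ, term (A+1) B (B'+1) (C+1) x y p) * B' * C⁻¹) := by
    have hsupp : Function.support (d2 A B B' C x y) ⊆ Set.range e2 := by
      intro p hp
      by_contra hcon
      exact hp (hvan2 p hcon)
    calc ∑' p : ℕ × ℕ, d2 A B B' C x y p
        = ∑' p : ℕ × ℕ, (d2 A B B' C x y ∘ e2) p := (e2inj.tsum_eq hsupp).symm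
      _ = ∑' p : ℕ × ℕ, y • (term (A+1) B (B'+1) (C+1) x y p * B' * C⁻¹) := by rw [hcomp2]
      _ = y • ∑' p : ℕ × ℕ, term (A+1) B (B'+1) (C+1) x y p * B' * C⁻¹ :=
          Summable.tsum_const_smul y ((SB'.mul_right B').mul_right C⁻¹)
      _ = y • ((∑' p : ℕ × ℕ, term (A+1) B (B'+1) (C+1) x y p * B') * C⁻¹) := by
          rw [(SB'.mul_right B').tsum_mul_right C⁻¹]
      _ = y • ((∑' p : ℕ × ℕ, term (A+1) B (B'+1) (C+1) x y p) * B' * C⁻¹) := by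
          rw [SB'.tsum_mul_right B']
  calc ∑' p : ℕ × ℕ, term (A+1) B B' C x y p
      = ∑' p : ℕ × ℕ,
          (term A B B' C x y p + d1 A B B' C x y p + d2 A B B' C x y p) :=
        tsum_congr (term_step hC hAB hB'C)
    _ = (∑' p : ℕ × ℕ, (term A B B' C x y p + d1 A B B' C x y p))
          + ∑' p : ℕ × ℕ, d2 A B B' C x y p := Summable.tsum_add (S0.add Sd1) Sd2
    _ = (∑' p : ℕ × ℕ, term A B B' C x y p) + (∑' p : ℕ × ℕ, d1 A B B' C x y p)
          + ∑' p : ℕ × ℕ, d2 A B B' C x y p := by rw [Summable.tsum_add S0 Sd1]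
    _ = _ := by rw [Td1, Td2]

end Step

section Final

variable {r : ℕ}
local notation "M" => Matrix (Fin r) (Fin r) ℂ

lemma step' (A B B' C : M) (x y : ℂ)
    (hC : ∀ k : ℕ, IsUnit (C + (k : ℂ) • (1 : M)))
    (hAB : A * B = B * A) (hB'C : B' * C = C * B')
    (hx : ‖x‖ < 1) (hy : ‖y‖ < 1) :
    appellF1 (A+1) B B' C x y =
      appellF1 A B B' C x y
        + x • (B * appellF1 (A+1) (B+1) B' (C+1) x y * C⁻¹)
        + y • (appellF1 (A+1) B (B'+1) (C+1) x y * B' * C⁻¹) := by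
  have h : ∀ (X Y Y' Z : M), appellF1 X Y Y' Z x y = ∑' p : ℕ × ℕ, term X Y Y' Z x y p :=
    fun X Y Y' Z => tsum_congr fun p => by obtain ⟨m, n⟩ := p; rfl
  rw [h, h, h, h]
  exact step A B B' C x y hC hAB hB'C hx hy

end Final

theorem appellF1_recursion_A {r : ℕ} (A B B' C : Matrix (Fin r) (Fin r) ℂ) (x y : ℂ)
    (hC : ∀ n : ℕ, IsUnit (C + (n : ℂ) • (1 : Matrix (Fin r) (Fin r) ℂ)))
    (hAB : A * B = B * A) (hB'C : B' * C = C * B')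
    (hx : ‖x‖ < 1) (hy : ‖y‖ < 1) :
    ((∀ k : ℕ, IsUnit (A + (k : ℂ) • (1 : Matrix (Fin r) (Fin r) ℂ))) →
      ∀ s : ℕ,
        appellF1 (A + (s : ℂ) • 1) B B' C x y =
          appellF1 A B B' C x y +
            x • (B * (∑ k ∈ Finset.Icc 1 s,
              appellF1 (A + (k : ℂ) • 1) (B + 1) B' (C + 1) x y) * C⁻¹) +
            y • ((∑ k ∈ Finset.Icc 1 s,
              appellF1 (A + (k : ℂ) • 1) B (B' + 1) (C + 1) x y) * B' * C⁻¹)) ∧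
    ((∀ k : ℕ, IsUnit (A + (k : ℂ) • (1 : Matrix (Fin r) (Fin r) ℂ))) →
      ∀ s : ℕ,
        (∀ k : ℕ, 1 ≤ k → k ≤ s → IsUnit (A - (k : ℂ) • (1 : Matrix (Fin r) (Fin r) ℂ))) →
        appellF1 (A - (s : ℂ) • 1) B B' C x y =
          appellF1 A B B' C x y -
            x • (B * (∑ k ∈ Finset.range s,
              appellF1 (A - (k : ℂ) • 1) (B + 1) B' (C + 1) x y) * C⁻¹) -
            y • ((∑ k ∈ Finset.range s,
              appellF1 (A - (k : ℂ) • 1) B (B' + 1) (C + 1) x y) * B' * C⁻¹)) := by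
  constructor
  · intro _ s
    induction s with
    | zero =>
      rw [Finset.Icc_eq_empty (by omega)]
      simp
    | succ s ih =>
      have hAB' : (A + (s : ℂ) • 1) * B = B * (A + (s : ℂ) • 1) := by
        rw [add_mul, mul_add, hAB, smul_mul_assoc, mul_smul_comm, one_mul, mul_one]
      have hstep := step' (A + (s : ℂ) • 1) B B' C x y hC hAB' hB'C hx hy
      have hcast : ∀ X : Matrix (Fin r) (Fin r) ℂ,
          X + ((s + 1 : ℕ) : ℂ) • 1 = X + (s : ℂ) • 1 + 1 := fun X => by
        rw [AppellAux.smul_one_cast, ← add_assoc]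
      rw [Finset.sum_Icc_succ_top (by omega : 1 ≤ s + 1),
          Finset.sum_Icc_succ_top (by omega : 1 ≤ s + 1), hcast A, hstep, ih]
      simp only [mul_add, add_mul, smul_add]
      abel
  · intro _ s
    induction s with
    | zero =>
      intro _
      simp
    | succ s ih =>
      intro hinv
      have ih' := ih fun k hk1 hk2 => hinv k hk1 (Nat.le_succ_of_le hk2)
      have hAB' : (A - ((s + 1 : ℕ) : ℂ) • 1) * B = B * (A - ((s + 1 : ℕ) : ℂ) • 1) := by
        rw [sub_mul, mul_sub, hAB, smul_mul_assoc, mul_smul_comm, one_mul, mul_one]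
      have hstep := step' (A - ((s + 1 : ℕ) : ℂ) • 1) B B' C x y hC hAB' hB'C hx hy
      have hcast : ∀ X : Matrix (Fin r) (Fin r) ℂ,
          X - ((s + 1 : ℕ) : ℂ) • 1 + 1 = X - (s : ℂ) • 1 := fun X => by
        rw [AppellAux.smul_one_cast]
        abel
      rw [hcast] at hstep
      have hmain : appellF1 (A - ((s + 1 : ℕ) : ℂ) • 1) B B' C x y =
          appellF1 (A - (s : ℂ) • 1) B B' C x y
            - x • (B * appellF1 (A - (s : ℂ) • 1) (B + 1) B' (C + 1) x y * C⁻¹)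
            - y • (appellF1 (A - (s : ℂ) • 1) B (B' + 1) (C + 1) x y * B' * C⁻¹) := by
        rw [hstep]
        abel
      rw [hmain, ih', Finset.sum_range_succ, Finset.sum_range_succ]
      simp only [mul_add, add_mul, smul_add]
      abel
end
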